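/- arXiv:0809.1052 — 7 statements merged into one kernel-verified Lean document; each statement's English description precedes it below -/
import Mathlib

section
/- For the scheme K_{n_1} ≀ K_{n_2} ≀ ⋯ ≀ K_{n_d} and any indices 0 ≤ i, j, h ≤ d, the matrix E_i^* A_j E_h^* is nonzero if and only if one of the following holds: (1) h = 0 and i = j; (2) i = j = h with 1 ≤ h and n_h ≥ 3; (3) i = j and 1 ≤ h < j; (4) j = h and 0 ≤ i < h; (5) i = h and 0 ≤ j < h. -/
open scoped Classical

noncomputable section

/-- Relation `R i` of the wreath product scheme `K_{n 1} ≀ ⋯ ≀ K_{n d}`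
(coordinates 0-indexed): `R 0` is the identity relation; for `1 ≤ i ≤ d`,
`(x, y) ∈ R i` iff coordinate `i - 1` is the largest coordinate where `x`
and `y` differ. -/
def wRel (d : ℕ) (n : Fin d → ℕ) (i : ℕ) (x y : ∀ k : Fin d, Fin (n k)) : Prop :=
  if h : 1 ≤ i ∧ i ≤ d then
    x ⟨i - 1, by omega⟩ ≠ y ⟨i - 1, by omega⟩ ∧
      ∀ k : Fin d, i - 1 < (k : ℕ) → x k = y k
  else x = y

/-- Adjacency matrix `A i`. -/
def wA (d : ℕ) (n : Fin d → ℕ) (i : ℕ) :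
    Matrix (∀ k : Fin d, Fin (n k)) (∀ k : Fin d, Fin (n k)) ℂ :=
  Matrix.of fun x y => if wRel d n i x y then 1 else 0

/-- The base vertex `(1, 1, …, 1)` (0-indexed: all coordinates `0`). -/
def wBase (d : ℕ) (n : Fin d → ℕ) (hn : ∀ k, 2 ≤ n k) : ∀ k : Fin d, Fin (n k) :=
  fun k => ⟨0, by have := hn k; omega⟩

/-- Dual idempotent `E_i^*` with respect to the base vertex. -/
def wE (d : ℕ) (n : Fin d → ℕ) (hn : ∀ k, 2 ≤ n k) (i : ℕ) :
    Matrix (∀ k : Fin d, Fin (n k)) (∀ k : Fin d, Fin (n k)) ℂ :=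
  Matrix.of fun y z => if y = z ∧ wRel d n i (wBase d n hn) y then 1 else 0

/-- `T₀`: the linear span of the triple products `E_i^* A_j E_h^*`. -/
def wT0 (d : ℕ) (n : Fin d → ℕ) (hn : ∀ k, 2 ≤ n k) :
    Submodule ℂ (Matrix (∀ k : Fin d, Fin (n k)) (∀ k : Fin d, Fin (n k)) ℂ) :=
  Submodule.span ℂ
    {M | ∃ i j h : ℕ, i ≤ d ∧ j ≤ d ∧ h ≤ d ∧
      M = wE d n hn i * wA d n j * wE d n hn h}

/-- The Terwilliger algebra: the unital subalgebra generated by the `A i`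
and the `E_i^*`. -/
def wT (d : ℕ) (n : Fin d → ℕ) (hn : ∀ k, 2 ≤ n k) :
    Subalgebra ℂ (Matrix (∀ k : Fin d, Fin (n k)) (∀ k : Fin d, Fin (n k)) ℂ) :=
  Algebra.adjoin ℂ
    ({M | ∃ i ≤ d, M = wA d n i} ∪ {M | ∃ i ≤ d, M = wE d n hn i})

lemma wRel_zero_iff (d : ℕ) (n : Fin d → ℕ) (x y : ∀ k : Fin d, Fin (n k)) :
    wRel d n 0 x y ↔ x = y := by simp [wRel]

lemma wRel_pos_iff (d : ℕ) (n : Fin d → ℕ) {i : ℕ} (h1 : 1 ≤ i) (h2 : i ≤ d)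
    (x y : ∀ k : Fin d, Fin (n k)) :
    wRel d n i x y ↔
      (x ⟨i - 1, by omega⟩ ≠ y ⟨i - 1, by omega⟩ ∧
        ∀ k : Fin d, i - 1 < (k : ℕ) → x k = y k) := by
  simp [wRel, h1, h2]

lemma wRel_base_elim (d : ℕ) (n : Fin d → ℕ) (hn : ∀ k, 2 ≤ n k) {i : ℕ} (h2 : i ≤ d)
    (y : ∀ k : Fin d, Fin (n k)) (hy : wRel d n i (wBase d n hn) y) :
    (∀ k : Fin d, i ≤ (k : ℕ) → (y k : ℕ) = 0) ∧
      (∀ _ : 1 ≤ i, (y ⟨i - 1, by omega⟩ : ℕ) ≠ 0) := by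
  rcases Nat.eq_zero_or_pos i with h1 | h1
  · subst h1
    rw [wRel_zero_iff] at hy
    subst hy
    exact ⟨fun k _ => rfl, fun h => by omega⟩
  · rw [wRel_pos_iff d n h1 h2] at hy
    obtain ⟨ha, hb⟩ := hy
    refine ⟨fun k hk => ?_, fun _ hc => ?_⟩
    · have := hb k (by omega)
      rw [← this]
      rfl
    · exact ha (Fin.ext (by simpa [wBase] using hc.symm))

lemma update_base_rel (d : ℕ) (n : Fin d → ℕ) (hn : ∀ k, 2 ≤ n k) {i : ℕ}
    (h1 : 1 ≤ i) (h2 : i ≤ d) (v : Fin (n ⟨i - 1, by omega⟩)) (hv : (v : ℕ) ≠ 0) :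
    wRel d n i (wBase d n hn)
      (Function.update (wBase d n hn) ⟨i - 1, by omega⟩ v) := by
  rw [wRel_pos_iff d n h1 h2]
  refine ⟨?_, fun k hk => ?_⟩
  · rw [Function.update_self]
    intro hc
    exact hv (by simpa [wBase] using congrArg Fin.val hc.symm)
  · rw [Function.update_of_ne (Fin.ne_of_val_ne (show (k : ℕ) ≠ i - 1 by omega))]

lemma exists_iff (d : ℕ) (hd : 1 ≤ d) (n : Fin d → ℕ) (hn : ∀ k, 2 ≤ n k)
    (i j h : ℕ) (hi : i ≤ d) (hj : j ≤ d) (hh : h ≤ d) :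
    (∃ y z : ∀ k : Fin d, Fin (n k),
        wRel d n i (wBase d n hn) y ∧ wRel d n j y z ∧ wRel d n h (wBase d n hn) z) ↔
      (h = 0 ∧ i = j) ∨
      (1 ≤ h ∧ i = h ∧ j = h ∧ 3 ≤ n ⟨h - 1, by exact Nat.lt_of_le_of_lt (Nat.sub_le_sub_right hh 1) (Nat.sub_one_lt_of_le hd le_rfl)⟩) ∨
      (i = j ∧ 1 ≤ h ∧ h < j) ∨
      (j = h ∧ i < h) ∨
      (i = h ∧ j < h) := by
  constructor
  · rintro ⟨y, z, hy, hyz, hz⟩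
    obtain ⟨hy0, hy1⟩ := wRel_base_elim d n hn hi y hy
    obtain ⟨hz0, hz1⟩ := wRel_base_elim d n hn hh z hz
    rcases Nat.eq_zero_or_pos j with hj1 | hj1
    · subst hj1
      rw [wRel_zero_iff] at hyz
      subst hyz
      have hih : i = h := by
        by_contra hne
        rcases Nat.lt_or_ge i h with hlt | hge
        · exact hz1 (by omega) (hy0 ⟨h - 1, by omega⟩ (show i ≤ h - 1 by omega))
        · exact hy1 (by omega) (hz0 ⟨i - 1, by omega⟩ (show h ≤ i - 1 by omega))
      rcases Nat.eq_zero_or_pos h with h0 | h0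
      · exact Or.inl ⟨h0, by omega⟩
      · exact Or.inr (Or.inr (Or.inr (Or.inr ⟨hih, by omega⟩)))
    · rw [wRel_pos_iff d n hj1 hj] at hyz
      obtain ⟨hne, heq⟩ := hyz
      have key1 : j < i → i ≤ h := by
        intro hji
        by_contra hc
        have e1 : y ⟨i - 1, by omega⟩ = z ⟨i - 1, by omega⟩ :=
          heq ⟨i - 1, by omega⟩ (show j - 1 < i - 1 by omega)
        exact hy1 (by omega)
          ((congrArg Fin.val e1).trans (hz0 ⟨i - 1, by omega⟩ (show h ≤ i - 1 by omega)))
      have key2 : j < h → h ≤ i := by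
        intro hjh
        by_contra hc
        have e1 : y ⟨h - 1, by omega⟩ = z ⟨h - 1, by omega⟩ :=
          heq ⟨h - 1, by omega⟩ (show j - 1 < h - 1 by omega)
        exact hz1 (by omega)
          ((congrArg Fin.val e1).symm.trans (hy0 ⟨h - 1, by omega⟩ (show i ≤ h - 1 by omega)))
      have key3 : ¬(i < j ∧ h < j) := by
        rintro ⟨hij, hhj⟩
        apply hne
        apply Fin.ext
        exact (hy0 ⟨j - 1, by omega⟩ (show i ≤ j - 1 by omega)).trans
          (hz0 ⟨j - 1, by omega⟩ (show h ≤ j - 1 by omega)).symm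
      by_cases hcase1 : j < i
      · have h1 := key1 hcase1
        have h2 := key2 (by omega)
        exact Or.inr (Or.inr (Or.inr (Or.inr ⟨by omega, by omega⟩)))
      · by_cases hcase2 : j < h
        · have := key2 hcase2
          omega
        · by_cases hcase3 : i = j
          · by_cases hcase4 : h = j
            · subst hcase3
              subst hcase4
              have hp : h - 1 < d := by omega
              have a1 : (y ⟨h - 1, hp⟩ : ℕ) ≠ 0 := hy1 (by omega)
              have a2 : (z ⟨h - 1, hp⟩ : ℕ) ≠ 0 := hz1 (by omega)
              have a3 : (y ⟨h - 1, hp⟩ : ℕ) ≠ (z ⟨h - 1, hp⟩ : ℕ) :=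
                fun hc => hne (Fin.ext hc)
              have b1 := (y ⟨h - 1, hp⟩).isLt
              have b2 := (z ⟨h - 1, hp⟩).isLt
              have hn3 : 3 ≤ n ⟨h - 1, hp⟩ := by omega
              exact Or.inr (Or.inl ⟨by omega, rfl, rfl, hn3⟩)
            · rcases Nat.eq_zero_or_pos h with h0 | h0
              · exact Or.inl ⟨h0, hcase3⟩
              · exact Or.inr (Or.inr (Or.inl ⟨hcase3, h0, by omega⟩))
          · have hnlt : ¬ h < j := fun hc => key3 ⟨by omega, hc⟩
            exact Or.inr (Or.inr (Or.inr (Or.inl ⟨by omega, by omega⟩)))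
  · rintro (⟨h0, hij⟩ | ⟨h1, hih, hjh, h3⟩ | ⟨hij, h1, hlt⟩ | ⟨hjh, hlt⟩ | ⟨hih, hlt⟩)
    -- Case 1 : h = 0, i = j
    · subst h0
      subst hij
      rcases Nat.eq_zero_or_pos i with hi0 | hi0
      · subst hi0
        exact ⟨wBase d n hn, wBase d n hn, (wRel_zero_iff d n _ _).2 rfl,
          (wRel_zero_iff d n _ _).2 rfl, (wRel_zero_iff d n _ _).2 rfl⟩
      · have hp : i - 1 < d := by omega
        refine ⟨Function.update (wBase d n hn) ⟨i - 1, hp⟩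
            ⟨1, by have := hn ⟨i - 1, hp⟩; omega⟩, wBase d n hn,
          update_base_rel d n hn hi0 hi _ one_ne_zero, ?_, (wRel_zero_iff d n _ _).2 rfl⟩
        rw [wRel_pos_iff d n hi0 hi]
        refine ⟨?_, fun k hk => ?_⟩
        · rw [Function.update_self]
          intro hc
          exact Nat.one_ne_zero (congrArg Fin.val hc)
        · rw [Function.update_of_ne (Fin.ne_of_val_ne (show (k : ℕ) ≠ i - 1 by omega))]
    -- Case 2 : 1 ≤ h, i = h, j = h, 3 ≤ n _
    · subst hih
      subst hjh
      have hp : j - 1 < d := by omega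
      have h3' : 3 ≤ n ⟨j - 1, hp⟩ := h3
      refine ⟨Function.update (wBase d n hn) ⟨j - 1, hp⟩ ⟨1, by omega⟩,
        Function.update (wBase d n hn) ⟨j - 1, hp⟩ ⟨2, by omega⟩,
        update_base_rel d n hn h1 hj _ (Nat.succ_ne_zero 0), ?_,
        update_base_rel d n hn h1 hj _ (Nat.succ_ne_zero 1)⟩
      rw [wRel_pos_iff d n h1 hj]
      refine ⟨?_, fun k hk => ?_⟩
      · rw [Function.update_self, Function.update_self]
        intro hc
        exact absurd (congrArg Fin.val hc) (by norm_num)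
      · rw [Function.update_of_ne (Fin.ne_of_val_ne (show (k : ℕ) ≠ j - 1 by omega)),
          Function.update_of_ne (Fin.ne_of_val_ne (show (k : ℕ) ≠ j - 1 by omega))]
    -- Case 3 : i = j, 1 ≤ h < j
    · subst hij
      have hq : i - 1 < d := by omega
      have hp : h - 1 < d := by omega
      refine ⟨Function.update (wBase d n hn) ⟨i - 1, hq⟩
          ⟨1, by have := hn ⟨i - 1, hq⟩; omega⟩,
        Function.update (wBase d n hn) ⟨h - 1, hp⟩
          ⟨1, by have := hn ⟨h - 1, hp⟩; omega⟩,
        update_base_rel d n hn (by omega) hi _ one_ne_zero, ?_,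
        update_base_rel d n hn h1 hh _ one_ne_zero⟩
      rw [wRel_pos_iff d n (by omega) hi]
      refine ⟨?_, fun k hk => ?_⟩
      · rw [Function.update_self,
          Function.update_of_ne (Fin.ne_of_val_ne (show i - 1 ≠ h - 1 by omega))]
        intro hc
        exact Nat.one_ne_zero (congrArg Fin.val hc)
      · rw [Function.update_of_ne (Fin.ne_of_val_ne (show (k : ℕ) ≠ i - 1 by omega)),
          Function.update_of_ne (Fin.ne_of_val_ne (show (k : ℕ) ≠ h - 1 by omega))]
    -- Case 4 : j = h, i < h
    · subst hjh
      have h1 : 1 ≤ j := by omega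
      have hp : j - 1 < d := by omega
      rcases Nat.eq_zero_or_pos i with hi0 | hi0
      · subst hi0
        refine ⟨wBase d n hn,
          Function.update (wBase d n hn) ⟨j - 1, hp⟩
            ⟨1, by have := hn ⟨j - 1, hp⟩; omega⟩,
          (wRel_zero_iff d n _ _).2 rfl,
          update_base_rel d n hn h1 hj _ (Nat.succ_ne_zero 0),
          update_base_rel d n hn h1 hj _ (Nat.succ_ne_zero 0)⟩
      · have hq : i - 1 < d := by omega
        refine ⟨Function.update (wBase d n hn) ⟨i - 1, hq⟩
            ⟨1, by have := hn ⟨i - 1, hq⟩; omega⟩,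
          Function.update (wBase d n hn) ⟨j - 1, hp⟩
            ⟨1, by have := hn ⟨j - 1, hp⟩; omega⟩,
          update_base_rel d n hn hi0 hi _ (Nat.succ_ne_zero 0), ?_,
          update_base_rel d n hn h1 hj _ (Nat.succ_ne_zero 0)⟩
        rw [wRel_pos_iff d n h1 hj]
        refine ⟨?_, fun k hk => ?_⟩
        · rw [Function.update_of_ne (Fin.ne_of_val_ne (show j - 1 ≠ i - 1 by omega)),
            Function.update_self]
          intro hc
          exact Nat.one_ne_zero (congrArg Fin.val hc).symm
        · rw [Function.update_of_ne (Fin.ne_of_val_ne (show (k : ℕ) ≠ i - 1 by omega)),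
            Function.update_of_ne (Fin.ne_of_val_ne (show (k : ℕ) ≠ j - 1 by omega))]
    -- Case 5 : i = h, j < h
    · subst hih
      have h1 : 1 ≤ i := by omega
      have hp : i - 1 < d := by omega
      rcases Nat.eq_zero_or_pos j with hj0 | hj0
      · subst hj0
        refine ⟨Function.update (wBase d n hn) ⟨i - 1, hp⟩
            ⟨1, by have := hn ⟨i - 1, hp⟩; omega⟩, _,
          update_base_rel d n hn h1 hi _ (Nat.succ_ne_zero 0),
          (wRel_zero_iff d n _ _).2 rfl,
          update_base_rel d n hn h1 hi _ (Nat.succ_ne_zero 0)⟩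
      · have hq : j - 1 < d := by omega
        set y := Function.update (wBase d n hn) ⟨i - 1, hp⟩
            ⟨1, by have := hn ⟨i - 1, hp⟩; omega⟩ with hy
        refine ⟨y, Function.update y ⟨j - 1, hq⟩
            ⟨1, by have := hn ⟨j - 1, hq⟩; omega⟩,
          update_base_rel d n hn h1 hi _ (Nat.succ_ne_zero 0), ?_, ?_⟩
        · rw [wRel_pos_iff d n hj0 hj]
          refine ⟨?_, fun k hk => ?_⟩
          · rw [Function.update_self, hy,
              Function.update_of_ne (Fin.ne_of_val_ne (show j - 1 ≠ i - 1 by omega))]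
            intro hc
            exact Nat.one_ne_zero (congrArg Fin.val hc).symm
          · rw [Function.update_of_ne (Fin.ne_of_val_ne (show (k : ℕ) ≠ j - 1 by omega))]
        · rw [wRel_pos_iff d n h1 hi]
          refine ⟨?_, fun k hk => ?_⟩
          · rw [Function.update_of_ne (Fin.ne_of_val_ne (show i - 1 ≠ j - 1 by omega)),
              hy, Function.update_self]
            intro hc
            exact Nat.one_ne_zero (congrArg Fin.val hc).symm
          · rw [Function.update_of_ne (Fin.ne_of_val_ne (show (k : ℕ) ≠ j - 1 by omega)),
              hy, Function.update_of_ne (Fin.ne_of_val_ne (show (k : ℕ) ≠ i - 1 by omega))]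

lemma wE_mul (d : ℕ) (n : Fin d → ℕ) (hn : ∀ k, 2 ≤ n k) (i : ℕ)
    (M : Matrix (∀ k : Fin d, Fin (n k)) (∀ k : Fin d, Fin (n k)) ℂ)
    (y z : ∀ k : Fin d, Fin (n k)) :
    (wE d n hn i * M) y z = if wRel d n i (wBase d n hn) y then M y z else 0 := by
  rw [Matrix.mul_apply, Finset.sum_eq_single y]
  · simp only [wE, Matrix.of_apply, true_and]
    split <;> simp
  · intro b _ hb
    simp [wE, Matrix.of_apply, (Ne.symm hb : y ≠ b)]
  · simp

lemma mul_wE (d : ℕ) (n : Fin d → ℕ) (hn : ∀ k, 2 ≤ n k) (h : ℕ)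
    (M : Matrix (∀ k : Fin d, Fin (n k)) (∀ k : Fin d, Fin (n k)) ℂ)
    (y z : ∀ k : Fin d, Fin (n k)) :
    (M * wE d n hn h) y z = if wRel d n h (wBase d n hn) z then M y z else 0 := by
  rw [Matrix.mul_apply, Finset.sum_eq_single z]
  · simp only [wE, Matrix.of_apply, true_and]
    split <;> simp
  · intro b _ hb
    simp [wE, Matrix.of_apply, hb]
  · simp

lemma triple_entry (d : ℕ) (n : Fin d → ℕ) (hn : ∀ k, 2 ≤ n k) (i j h : ℕ)
    (y z : ∀ k : Fin d, Fin (n k)) :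
    (wE d n hn i * wA d n j * wE d n hn h) y z =
      if wRel d n i (wBase d n hn) y ∧ wRel d n j y z ∧ wRel d n h (wBase d n hn) z
      then 1 else 0 := by
  rw [mul_wE, wE_mul]
  simp only [wA, Matrix.of_apply]
  by_cases h1 : wRel d n i (wBase d n hn) y <;>
    by_cases h2 : wRel d n j y z <;>
      by_cases h3 : wRel d n h (wBase d n hn) z <;> simp [h1, h2, h3]

lemma triple_ne_zero_iff (d : ℕ) (n : Fin d → ℕ) (hn : ∀ k, 2 ≤ n k) (i j h : ℕ) :
    wE d n hn i * wA d n j * wE d n hn h ≠ 0 ↔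
      ∃ y z, wRel d n i (wBase d n hn) y ∧ wRel d n j y z ∧ wRel d n h (wBase d n hn) z := by
  constructor
  · intro hM
    by_contra hc
    push_neg at hc
    apply hM
    ext y z
    rw [triple_entry, Matrix.zero_apply, if_neg]
    intro ⟨a, b, c⟩
    exact hc y z a b c
  · rintro ⟨y, z, hy, hyz, hz⟩ hM
    have := congrFun (congrFun hM y) z
    rw [triple_entry, if_pos ⟨hy, hyz, hz⟩] at this
    simp at this

/-- For the scheme `K_{n_1} ≀ ⋯ ≀ K_{n_d}` and any indices
`0 ≤ i, j, h ≤ d`, the matrix `E_i^* A_j E_h^*` is nonzero iff one of: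
(1) `h = 0` and `i = j`; (2) `i = j = h` with `1 ≤ h` and `n_h ≥ 3`;
(3) `i = j` and `1 ≤ h < j`; (4) `j = h` and `i < h`; (5) `i = h` and `j < h`. -/
theorem triple_product_nonzero_iff_wreath (d : ℕ) (hd : 1 ≤ d)
    (n : Fin d → ℕ) (hn : ∀ k, 2 ≤ n k)
    (i j h : ℕ) (hi : i ≤ d) (hj : j ≤ d) (hh : h ≤ d) :
    wE d n hn i * wA d n j * wE d n hn h ≠ 0 ↔
      (h = 0 ∧ i = j) ∨
      (1 ≤ h ∧ i = h ∧ j = h ∧ 3 ≤ n ⟨h - 1, by omega⟩) ∨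
      (i = j ∧ 1 ≤ h ∧ h < j) ∨
      (j = h ∧ i < h) ∨
      (i = h ∧ j < h) := by
  exact (triple_ne_zero_iff d n hn i j h).trans (exists_iff d hd n hn i j h hi hj hh)
end
end

section
/- For the scheme K_{n_1} ≀ K_{n_2} ≀ ⋯ ≀ K_{n_d}, the ℂ-vector space T_0 has dimension (d+1)^2 + d(d+1)/2 − b, where b = |{k ∈ {1,…,d} : n_k = 2}| is the number of factors K_{n_k} with n_k = 2. In particular (d+1)^2 + d(d−1)/2 ≤ dim_ℂ T_0 ≤ (d+1)^2 + d(d+1)/2. -/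
open scoped Classical

noncomputable section

namespace WreathAux

section scratch
variable {d : ℕ} {n : Fin d → ℕ}
variable {d : ℕ} {n : Fin d → ℕ}

lemma wRel_unique {i i' : ℕ} (hi : i ≤ d) (hi' : i' ≤ d)
    {x y : ∀ k : Fin d, Fin (n k)} (h1 : wRel d n i x y) (h2 : wRel d n i' x y) :
    i = i' := by
  unfold wRel at h1 h2
  split_ifs at h1 h2 with c1 c2 c2
  · -- both ≥ 1
    by_contra hne
    rcases Nat.lt_or_ge (i-1) (i'-1) with hlt | hge
    · exact h2.1 (h1.2 ⟨i'-1, by omega⟩ hlt)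
    · rcases Nat.lt_or_ge (i'-1) (i-1) with hlt' | hge'
      · exact h1.1 (h2.2 ⟨i-1, by omega⟩ hlt')
      · omega
  · exact absurd (congrFun h2 _) h1.1
  · exact absurd (congrFun h1 _) h2.1
  · omega


def next (d : ℕ) (n : Fin d → ℕ) (m : ℕ) : ℕ := if h : m < d then n ⟨m, h⟩ else 0

def goodP (d : ℕ) (n : Fin d → ℕ) (t : ℕ × ℕ × ℕ) : Prop :=
  (t.2.1 = 0 ∧ t.1 = t.2.2) ∨
  (1 ≤ t.2.1 ∧ ((t.1 = t.2.1 ∧ t.2.2 < t.2.1) ∨ (t.1 < t.2.1 ∧ t.2.2 = t.2.1) ∨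
    (t.2.1 < t.1 ∧ t.1 = t.2.2) ∨
    (t.1 = t.2.1 ∧ t.2.2 = t.2.1 ∧ 3 ≤ next d n (t.2.1 - 1))))

variable (hn : ∀ k, 2 ≤ n k)

lemma base_agree {i : ℕ} (hi : i ≤ d) {y : ∀ k : Fin d, Fin (n k)}
    (r : wRel d n i (wBase d n hn) y) :
    ∀ k : Fin d, i ≤ (k : ℕ) → wBase d n hn k = y k := by
  unfold wRel at r
  split_ifs at r with c
  · exact fun k hk => r.2 k (by omega)
  · exact fun k _ => congrFun r k

lemma base_ne {i : ℕ} (hi1 : 1 ≤ i) (hi2 : i ≤ d) {y : ∀ k : Fin d, Fin (n k)}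
    (r : wRel d n i (wBase d n hn) y) :
    wBase d n hn ⟨i - 1, by omega⟩ ≠ y ⟨i - 1, by omega⟩ := by
  unfold wRel at r
  rw [dif_pos ⟨hi1, hi2⟩] at r
  exact r.1

lemma rel_good {i j h : ℕ} (hi : i ≤ d) (hj : j ≤ d) (hh : h ≤ d)
    {y z : ∀ k : Fin d, Fin (n k)}
    (r1 : wRel d n i (wBase d n hn) y) (r2 : wRel d n j y z)
    (r3 : wRel d n h (wBase d n hn) z) :
    goodP d n (i, j, h) := by
  rcases Nat.eq_zero_or_pos j with hj0 | hj1
  · subst hj0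
    have : y = z := by unfold wRel at r2; simpa using r2
    subst this
    exact Or.inl ⟨rfl, wRel_unique hi hh r1 r3⟩
  · have hj1' : 1 ≤ j := hj1
    unfold wRel at r2
    rw [dif_pos ⟨hj1', hj⟩] at r2
    rcases Nat.lt_trichotomy i j with hij | hij | hij
    · -- i < j : z is in sphere j, so h = j
      have hzj : wRel d n j (wBase d n hn) z := by
        unfold wRel
        rw [dif_pos ⟨hj1', hj⟩]
        refine ⟨?_, fun k hk => ?_⟩
        · rw [base_agree hn hi r1 ⟨j-1, by omega⟩ (by simp; omega)]
          exact r2.1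
        · rw [base_agree hn hi r1 k (by omega)]
          exact r2.2 k hk
      have := wRel_unique hj hh hzj r3
      exact Or.inr ⟨hj1', Or.inr (Or.inl ⟨hij, this.symm⟩)⟩
    · -- i = j : compare h with j
      subst hij
      rcases Nat.lt_trichotomy h i with hhi | hhi | hhi
      · exact Or.inr ⟨hj1', Or.inl ⟨rfl, hhi⟩⟩
      · -- h = h = h : need 3 ≤ n
        subst hhi
        have key : 3 ≤ next d n (h - 1) := by
          have h1 := base_ne hn hj1' hj r1
          have h2 := base_ne hn hj1' hj r3
          have h3 := r2.1
          have e1 : ((wBase d n hn ⟨h-1, by omega⟩ : Fin _) : ℕ) = 0 := rfl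
          have b1 : ((y ⟨h-1, by omega⟩ : Fin _) : ℕ) ≠ 0 := by
            intro hc; exact h1 (Fin.ext (by rw [e1, hc]))
          have b2 : ((z ⟨h-1, by omega⟩ : Fin _) : ℕ) ≠ 0 := by
            intro hc; exact h2 (Fin.ext (by rw [e1, hc]))
          have b3 : ((y ⟨h-1, by omega⟩ : Fin _) : ℕ) ≠ ((z ⟨h-1, by omega⟩ : Fin _) : ℕ) := by
            intro hc; exact h3 (Fin.ext hc)
          have b4 := (y ⟨h-1, by omega⟩ : Fin _).isLt
          have b5 := (z ⟨h-1, by omega⟩ : Fin _).isLt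
          unfold next
          rw [dif_pos (show h - 1 < d by omega)]
          omega
        exact Or.inr ⟨hj1', Or.inr (Or.inr (Or.inr ⟨rfl, rfl, key⟩))⟩
      · -- h > i = i : y would be in sphere h, contradiction
        exfalso
        have hyh : wRel d n h (wBase d n hn) y := by
          unfold wRel
          rw [dif_pos ⟨by omega, hh⟩]
          refine ⟨?_, fun k hk => ?_⟩
          · rw [show y ⟨h-1, by omega⟩ = z ⟨h-1, by omega⟩ from
              r2.2 ⟨h-1, by omega⟩ (show i - 1 < h - 1 by omega)]
            exact base_ne hn (by omega) hh r3
          · rw [r2.2 k (by omega)]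
            exact base_agree hn hh r3 k (by omega)
        have := wRel_unique hi hh r1 hyh
        omega
    · -- i > j : z in sphere i, so h = i
      have hzi : wRel d n i (wBase d n hn) z := by
        unfold wRel
        rw [dif_pos ⟨by omega, hi⟩]
        refine ⟨?_, fun k hk => ?_⟩
        · rw [← r2.2 ⟨i-1, by omega⟩ (by simp; omega)]
          exact base_ne hn (by omega) hi r1
        · rw [← r2.2 k (by omega)]
          exact base_agree hn hi r1 k (by omega)
      have := wRel_unique hi hh hzi r3
      exact Or.inr ⟨hj1', Or.inr (Or.inr (Or.inl ⟨hij, this⟩))⟩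


def pt (hn : ∀ k, 2 ≤ n k) (f : ℕ → ℕ) : ∀ k : Fin d, Fin (n k) :=
  fun k => ⟨f k.val % n k, Nat.mod_lt _ (by have := hn k; omega)⟩

include hn in
lemma two_le_next {m : ℕ} (hm : m < d) : 2 ≤ next d n m := by
  unfold next; rw [dif_pos hm]; exact hn _

include hn in
lemma mod1 {m : ℕ} (hm : m < d) : 1 % next d n m = 1 :=
  Nat.mod_eq_of_lt (two_le_next hn hm)

lemma pt_zero : pt hn (fun _ => 0) = wBase d n hn := by
  funext k; exact Fin.ext (by simp [pt, wBase])

lemma next_eq (k : Fin d) : next d n k.val = n k := by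
  unfold next; rw [dif_pos k.isLt]

lemma wRel_of_val {i : ℕ} (h1 : 1 ≤ i) (h2 : i ≤ d) {x y : ∀ k : Fin d, Fin (n k)}
    (ha : ((x ⟨i - 1, by omega⟩ : Fin _) : ℕ) ≠ ((y ⟨i - 1, by omega⟩ : Fin _) : ℕ))
    (hb : ∀ k : Fin d, i - 1 < (k : ℕ) → ((x k : Fin _) : ℕ) = ((y k : Fin _) : ℕ)) :
    wRel d n i x y := by
  unfold wRel
  rw [dif_pos ⟨h1, h2⟩]
  exact ⟨fun hc => ha (congrArg Fin.val hc), fun k hk => Fin.ext (hb k hk)⟩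

lemma pt_val (f : ℕ → ℕ) (k : Fin d) :
    ((pt hn f k : Fin _) : ℕ) = f k.val % next d n k.val := by
  rw [next_eq]; rfl

lemma wRel_base_pt {i : ℕ} (h1 : 1 ≤ i) (h2 : i ≤ d) (f : ℕ → ℕ)
    (hne : f (i - 1) % next d n (i - 1) ≠ 0)
    (hz : ∀ m, i - 1 < m → f m = 0) :
    wRel d n i (wBase d n hn) (pt hn f) := by
  refine wRel_of_val h1 h2 ?_ ?_
  · rw [pt_val]
    exact fun hc => hne hc.symm
  · intro k hk
    rw [pt_val, hz k.val hk]
    simp [wBase]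

lemma wRel_pt_pt {j : ℕ} (h1 : 1 ≤ j) (h2 : j ≤ d) (f g : ℕ → ℕ)
    (hne : f (j - 1) % next d n (j - 1) ≠ g (j - 1) % next d n (j - 1))
    (hag : ∀ m, j - 1 < m → f m = g m) :
    wRel d n j (pt hn f) (pt hn g) := by
  refine wRel_of_val h1 h2 ?_ ?_
  · rw [pt_val, pt_val]
    exact hne
  · intro k hk
    rw [pt_val, pt_val, hag k.val hk]

def uu (hn : ∀ k, 2 ≤ n k) (i : ℕ) : ∀ k : Fin d, Fin (n k) :=
  pt hn (fun m => if 1 ≤ i ∧ m = i - 1 then 1 else 0)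

lemma wRel_base_uu {i : ℕ} (hi : i ≤ d) :
    wRel d n i (wBase d n hn) (uu hn i) := by
  rcases Nat.eq_zero_or_pos i with rfl | h1
  · have huu : uu hn 0 = wBase d n hn := by
      funext k
      exact Fin.ext (by simp [uu, pt, wBase])
    rw [huu]
    unfold wRel
    simp
  · refine wRel_base_pt hn h1 hi _ ?_ ?_
    · rw [if_pos ⟨h1, rfl⟩, mod1 hn (by omega)]
      omega
    · intro m hm
      rw [if_neg (by omega)]

lemma good_witness {i j h : ℕ} (hi : i ≤ d) (hj : j ≤ d) (hh : h ≤ d)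
    (hg : goodP d n (i, j, h)) :
    ∃ y z, wRel d n i (wBase d n hn) y ∧ wRel d n j y z ∧
      wRel d n h (wBase d n hn) z := by
  replace hg : (j = 0 ∧ i = h) ∨ (1 ≤ j ∧ ((i = j ∧ h < j) ∨ (i < j ∧ h = j) ∨
      (j < i ∧ i = h) ∨ (i = j ∧ h = j ∧ 3 ≤ next d n (j - 1)))) := hg
  rcases hg with ⟨rfl, rfl⟩ | ⟨hj1, ⟨rfl, hhj⟩ | ⟨hij, rfl⟩ | ⟨hji, rfl⟩ | ⟨rfl, rfl, h3⟩⟩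
  · -- j = 0, i = h
    refine ⟨uu hn i, uu hn i, wRel_base_uu hn hi, ?_, wRel_base_uu hn hi⟩
    unfold wRel; simp
  · -- i = j, h < i
    refine ⟨uu hn i, uu hn h, wRel_base_uu hn hi, ?_, wRel_base_uu hn hh⟩
    refine wRel_pt_pt hn (by omega) hi _ _ ?_ (fun m hm => ?_)
    · rw [if_pos ⟨by omega, rfl⟩, if_neg (by omega), mod1 hn (by omega), Nat.zero_mod]
      omega
    · rw [if_neg (by omega), if_neg (by omega)]
  · -- i < h, j = h
    refine ⟨uu hn i, uu hn h, wRel_base_uu hn hi, ?_, wRel_base_uu hn hh⟩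
    refine wRel_pt_pt hn (by omega) hh _ _ ?_ (fun m hm => ?_)
    · rw [if_neg (by omega), if_pos ⟨by omega, rfl⟩, mod1 hn (by omega), Nat.zero_mod]
      omega
    · rw [if_neg (by omega), if_neg (by omega)]
  · -- j < i, h = i
    refine ⟨uu hn i, pt hn (fun m => if m = i - 1 ∨ m = j - 1 then 1 else 0),
      wRel_base_uu hn hi, ?_, ?_⟩
    · refine wRel_pt_pt hn (by omega) hj _ _ ?_ (fun m hm => ?_)
      · rw [if_neg (by omega), if_pos (Or.inr rfl), mod1 hn (by omega), Nat.zero_mod]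
        omega
      · by_cases hmi : m = i - 1
        · rw [if_pos ⟨by omega, hmi⟩, if_pos (Or.inl hmi)]
        · rw [if_neg (by omega), if_neg (by omega)]
    · refine wRel_base_pt hn (by omega) hi _ ?_ (fun m hm => ?_)
      · rw [if_pos (Or.inl rfl), mod1 hn (by omega)]
        omega
      · rw [if_neg (by omega)]
  · -- i = j = h, 3 ≤ n
    refine ⟨uu hn h, pt hn (fun m => if m = h - 1 then 2 else 0),
      wRel_base_uu hn hh, ?_, ?_⟩
    · refine wRel_pt_pt hn (by omega) hh _ _ ?_ (fun m hm => ?_)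
      · rw [if_pos ⟨by omega, rfl⟩, if_pos rfl, mod1 hn (by omega),
          Nat.mod_eq_of_lt (by omega)]
        omega
      · rw [if_neg (by omega), if_neg (by omega)]
    · refine wRel_base_pt hn (by omega) hh _ ?_ (fun m hm => ?_)
      · rw [if_pos rfl, Nat.mod_eq_of_lt (by omega)]
        omega
      · rw [if_neg (by omega)]

def MM (hn : ∀ k, 2 ≤ n k) (t : ℕ × ℕ × ℕ) :
    Matrix (∀ k : Fin d, Fin (n k)) (∀ k : Fin d, Fin (n k)) ℂ :=
  Matrix.of fun y z =>
    if wRel d n t.1 (wBase d n hn) y ∧ wRel d n t.2.1 y z ∧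
        wRel d n t.2.2 (wBase d n hn) z then 1 else 0

lemma wE_eq_diagonal (i : ℕ) :
    wE d n hn i =
      Matrix.diagonal (fun y => if wRel d n i (wBase d n hn) y then (1 : ℂ) else 0) := by
  ext y z
  by_cases hyz : y = z
  · subst hyz
    by_cases hp : wRel d n i (wBase d n hn) y
    · simp [wE, Matrix.diagonal, hp]
    · simp [wE, Matrix.diagonal, hp]
  · simp [wE, Matrix.diagonal, hyz]

lemma triple_eq (i j h : ℕ) :
    wE d n hn i * wA d n j * wE d n hn h = MM hn (i, j, h) := by
  rw [wE_eq_diagonal hn i, wE_eq_diagonal hn h]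
  ext y z
  rw [Matrix.mul_diagonal, Matrix.diagonal_mul]
  show (if wRel d n i (wBase d n hn) y then (1:ℂ) else 0) *
      (if wRel d n j y z then (1:ℂ) else 0) *
      (if wRel d n h (wBase d n hn) z then (1:ℂ) else 0) = MM hn (i, j, h) y z
  unfold MM
  by_cases h1 : wRel d n i (wBase d n hn) y <;>
    by_cases h2 : wRel d n j y z <;>
      by_cases h3 : wRel d n h (wBase d n hn) z <;>
        simp [h1, h2, h3]

lemma MM_eq_zero {i j h : ℕ} (hi : i ≤ d) (hj : j ≤ d) (hh : h ≤ d)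
    (hng : ¬ goodP d n (i, j, h)) : MM hn (i, j, h) = 0 := by
  ext y z
  unfold MM
  simp only [Matrix.of_apply, Matrix.zero_apply]
  rw [if_neg]
  rintro ⟨r1, r2, r3⟩
  exact hng (rel_good hn hi hj hh r1 r2 r3)

lemma MM_entry_one {i j h : ℕ} {y z : ∀ k : Fin d, Fin (n k)}
    (r1 : wRel d n i (wBase d n hn) y) (r2 : wRel d n j y z)
    (r3 : wRel d n h (wBase d n hn) z) : MM hn (i, j, h) y z = 1 := by
  unfold MM
  rw [Matrix.of_apply, if_pos ⟨r1, r2, r3⟩]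

lemma MM_disjoint {t t' : ℕ × ℕ × ℕ}
    (h1 : t.1 ≤ d) (h2 : t.2.1 ≤ d) (h3 : t.2.2 ≤ d)
    (h1' : t'.1 ≤ d) (h2' : t'.2.1 ≤ d) (h3' : t'.2.2 ≤ d)
    {y z : ∀ k : Fin d, Fin (n k)}
    (hyz : MM hn t y z ≠ 0) (hyz' : MM hn t' y z ≠ 0) : t = t' := by
  have e : ∀ {s : ℕ × ℕ × ℕ}, MM hn s y z ≠ 0 →
      wRel d n s.1 (wBase d n hn) y ∧ wRel d n s.2.1 y z ∧
        wRel d n s.2.2 (wBase d n hn) z := by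
    intro s hs
    by_contra hc
    exact hs (by unfold MM; rw [Matrix.of_apply, if_neg hc])
  obtain ⟨r1, r2, r3⟩ := e hyz
  obtain ⟨r1', r2', r3'⟩ := e hyz'
  obtain ⟨a, b, c⟩ := t
  obtain ⟨a', b', c'⟩ := t'
  simp only [Prod.mk.injEq]
  exact ⟨wRel_unique h1 h1' r1 r1', wRel_unique h2 h2' r2 r2', wRel_unique h3 h3' r3 r3'⟩

def GG (d : ℕ) (n : Fin d → ℕ) : Finset (ℕ × ℕ × ℕ) :=
  (Finset.range (d+1) ×ˢ Finset.range (d+1) ×ˢ Finset.range (d+1)).filter (goodP d n)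

lemma mem_GG {t : ℕ × ℕ × ℕ} :
    t ∈ GG d n ↔ (t.1 ≤ d ∧ t.2.1 ≤ d ∧ t.2.2 ≤ d) ∧ goodP d n t := by
  unfold GG
  simp [Finset.mem_filter, Finset.mem_product, Nat.lt_succ_iff, and_assoc]

lemma span_eq :
    wT0 d n hn = Submodule.span ℂ (MM hn '' ↑(GG d n)) := by
  unfold wT0
  apply le_antisymm
  · rw [Submodule.span_le]
    rintro M ⟨i, j, h, hi, hj, hh, rfl⟩
    rw [triple_eq hn i j h]
    by_cases hg : goodP d n (i, j, h)
    · exact Submodule.subset_span ⟨(i,j,h), mem_GG.2 ⟨⟨hi, hj, hh⟩, hg⟩, rfl⟩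
    · rw [MM_eq_zero hn hi hj hh hg]
      exact Submodule.zero_mem _
  · rw [Submodule.span_le]
    rintro M ⟨t, ht, rfl⟩
    obtain ⟨⟨h1, h2, h3⟩, _⟩ := mem_GG.1 ht
    exact Submodule.subset_span
      ⟨t.1, t.2.1, t.2.2, h1, h2, h3, (triple_eq hn t.1 t.2.1 t.2.2).symm⟩

lemma li : LinearIndependent ℂ (fun t : ↥(GG d n) => MM hn (t : ℕ × ℕ × ℕ)) := by
  rw [Fintype.linearIndependent_iff]
  intro c hc t
  obtain ⟨⟨h1, h2, h3⟩, hg⟩ := mem_GG.1 t.2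
  obtain ⟨y, z, r1, r2, r3⟩ :=
    good_witness (i := (t : ℕ × ℕ × ℕ).1) (j := (t : ℕ × ℕ × ℕ).2.1)
      (h := (t : ℕ × ℕ × ℕ).2.2) hn h1 h2 h3 hg
  have hev := congrFun (congrFun hc y) z
  simp only [Matrix.sum_apply, Matrix.smul_apply, Matrix.zero_apply, smul_eq_mul] at hev
  rw [Finset.sum_eq_single t] at hev
  · have hone : MM hn (t : ℕ × ℕ × ℕ) y z = 1 := MM_entry_one hn r1 r2 r3
    rw [hone, mul_one] at hev
    exact hev
  · intro t' _ hne
    obtain ⟨⟨h1', h2', h3'⟩, _⟩ := mem_GG.1 t'.2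
    by_cases hz : MM hn (t' : ℕ × ℕ × ℕ) y z = 0
    · rw [hz, mul_zero]
    · exfalso
      have hnz : MM hn (t : ℕ × ℕ × ℕ) y z ≠ 0 := by
        rw [MM_entry_one hn r1 r2 r3]; exact one_ne_zero
      exact hne (Subtype.ext (MM_disjoint hn h1' h2' h3' h1 h2 h3 hz hnz))
  · intro ht
    exact absurd t.2 (by simpa using ht)

lemma finrank_T0 : Module.finrank ℂ ↥(wT0 d n hn) = (GG d n).card := by
  rw [span_eq hn]
  have hr : MM hn '' ↑(GG d n) =
      Set.range (fun t : ↥(GG d n) => MM hn (t : ℕ × ℕ × ℕ)) := by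
    ext M
    constructor
    · rintro ⟨t, ht, rfl⟩
      exact ⟨⟨t, ht⟩, rfl⟩
    · rintro ⟨t, rfl⟩
      exact ⟨↑t, t.2, rfl⟩
  rw [hr, finrank_span_eq_card (li hn)]
  exact Fintype.card_coe _

def G0 (d : ℕ) : Finset (ℕ × ℕ × ℕ) := (Finset.range (d+1)).image fun i => (i, 0, i)
def G1 (d : ℕ) : Finset (ℕ × ℕ × ℕ) :=
  (Finset.Icc 1 d).biUnion fun j => (Finset.range j).image fun h => (j, j, h)
def G2 (d : ℕ) : Finset (ℕ × ℕ × ℕ) :=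
  (Finset.Icc 1 d).biUnion fun j => (Finset.range j).image fun i => (i, j, j)
def G3 (d : ℕ) : Finset (ℕ × ℕ × ℕ) :=
  (Finset.Icc 1 d).biUnion fun j => (Finset.Icc (j+1) d).image fun i => (i, j, i)
def G4 (d : ℕ) (n : Fin d → ℕ) : Finset (ℕ × ℕ × ℕ) :=
  ((Finset.Icc 1 d).filter fun j => 3 ≤ next d n (j-1)).image fun j => (j, j, j)

lemma mem_G0 {i j h : ℕ} : (i, j, h) ∈ G0 d ↔ j = 0 ∧ i = h ∧ i ≤ d := by
  unfold G0
  simp only [Finset.mem_image, Finset.mem_range, Nat.lt_succ_iff, Prod.mk.injEq]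
  constructor
  · rintro ⟨a, ha, rfl, rfl, rfl⟩; exact ⟨rfl, rfl, ha⟩
  · rintro ⟨rfl, rfl, ha⟩; exact ⟨i, ha, rfl, rfl, rfl⟩

lemma mem_G1 {i j h : ℕ} : (i, j, h) ∈ G1 d ↔ 1 ≤ j ∧ j ≤ d ∧ i = j ∧ h < j := by
  unfold G1
  simp only [Finset.mem_biUnion, Finset.mem_Icc, Finset.mem_image, Finset.mem_range,
    Prod.mk.injEq]
  constructor
  · rintro ⟨a, ⟨ha1, ha2⟩, b, hb, rfl, rfl, rfl⟩; exact ⟨ha1, ha2, rfl, hb⟩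
  · rintro ⟨h1, h2, rfl, h4⟩; exact ⟨i, ⟨h1, h2⟩, h, h4, rfl, rfl, rfl⟩

lemma mem_G2 {i j h : ℕ} : (i, j, h) ∈ G2 d ↔ 1 ≤ j ∧ j ≤ d ∧ i < j ∧ h = j := by
  unfold G2
  simp only [Finset.mem_biUnion, Finset.mem_Icc, Finset.mem_image, Finset.mem_range,
    Prod.mk.injEq]
  constructor
  · rintro ⟨a, ⟨ha1, ha2⟩, b, hb, rfl, rfl, rfl⟩; exact ⟨ha1, ha2, hb, rfl⟩
  · rintro ⟨h1, h2, h3, rfl⟩; exact ⟨h, ⟨h1, h2⟩, i, h3, rfl, rfl, rfl⟩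

lemma mem_G3 {i j h : ℕ} :
    (i, j, h) ∈ G3 d ↔ 1 ≤ j ∧ j ≤ d ∧ j < i ∧ i ≤ d ∧ i = h := by
  unfold G3
  simp only [Finset.mem_biUnion, Finset.mem_Icc, Finset.mem_image, Prod.mk.injEq]
  constructor
  · rintro ⟨a, ⟨ha1, ha2⟩, b, ⟨hb1, hb2⟩, rfl, rfl, rfl⟩
    exact ⟨ha1, ha2, by omega, hb2, rfl⟩
  · rintro ⟨h1, h2, h3, h4, h5⟩; exact ⟨j, ⟨h1, h2⟩, i, ⟨by omega, h4⟩, rfl, rfl, h5⟩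

lemma mem_G4 {i j h : ℕ} :
    (i, j, h) ∈ G4 d n ↔ 1 ≤ j ∧ j ≤ d ∧ i = j ∧ h = j ∧ 3 ≤ next d n (j - 1) := by
  unfold G4
  simp only [Finset.mem_image, Finset.mem_filter, Finset.mem_Icc, Prod.mk.injEq]
  constructor
  · rintro ⟨a, ⟨⟨ha1, ha2⟩, ha3⟩, rfl, rfl, rfl⟩; exact ⟨ha1, ha2, rfl, rfl, ha3⟩
  · rintro ⟨h1, h2, h3, h4, h5⟩; exact ⟨j, ⟨⟨h1, h2⟩, h5⟩, h3.symm, rfl, h4.symm⟩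

lemma GG_eq : GG d n = G0 d ∪ (G1 d ∪ (G2 d ∪ (G3 d ∪ G4 d n))) := by
  ext ⟨i, j, h⟩
  rw [Finset.mem_union, Finset.mem_union, Finset.mem_union, Finset.mem_union,
    mem_GG, mem_G0, mem_G1, mem_G2, mem_G3, mem_G4]
  show (_ ∧ ((j = 0 ∧ i = h) ∨ (1 ≤ j ∧ ((i = j ∧ h < j) ∨ (i < j ∧ h = j) ∨
      (j < i ∧ i = h) ∨ (i = j ∧ h = j ∧ 3 ≤ next d n (j - 1)))))) ↔ _
  by_cases hP : 3 ≤ next d n (j - 1) <;>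
    simp only [hP, and_true, true_and, and_false, false_and, or_false, false_or] <;>
    omega

lemma card_G0 : (G0 d).card = d + 1 := by
  unfold G0
  rw [Finset.card_image_of_injective _ (fun a b hab => (Prod.ext_iff.1 hab).1),
    Finset.card_range]

lemma sum_Icc_mul_two (d : ℕ) : (∑ j ∈ Finset.Icc 1 d, j) * 2 = d * (d + 1) := by
  induction d with
  | zero => simp
  | succ m ih =>
    rw [Finset.sum_Icc_succ_top (by omega)]
    have : (m + 1) * (m + 1 + 1) = m * (m + 1) + 2 * (m + 1) := by ring
    omega

lemma sum_Icc_sub_mul_two (d : ℕ) :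
    (∑ j ∈ Finset.Icc 1 d, (d - j)) * 2 = d * (d - 1) := by
  have h1 : (∑ j ∈ Finset.Icc 1 d, (d - j)) + (∑ j ∈ Finset.Icc 1 d, j)
      = d * d := by
    rw [← Finset.sum_add_distrib]
    rw [Finset.sum_congr rfl (fun j hj => by
      rw [Finset.mem_Icc] at hj
      omega : ∀ j ∈ Finset.Icc 1 d, d - j + j = d)]
    rw [Finset.sum_const, Nat.card_Icc, smul_eq_mul]
    have : d + 1 - 1 = d := by omega
    rw [this]
  have h2 := sum_Icc_mul_two d
  rcases Nat.eq_zero_or_pos d with rfl | hd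
  · simp
  · obtain ⟨e, rfl⟩ : ∃ e, d = e + 1 := ⟨d - 1, by omega⟩
    have q1 : (e + 1) * (e + 1 + 1) = e * e + 3 * e + 2 := by ring
    have q2 : (e + 1) * (e + 1) = e * e + 2 * e + 1 := by ring
    have q3 : (e + 1) * (e + 1 - 1) = e * e + e := by
      have : e + 1 - 1 = e := rfl
      rw [this]; ring
    omega

lemma card_G1 : (G1 d).card = ∑ j ∈ Finset.Icc 1 d, j := by
  unfold G1
  rw [Finset.card_biUnion]
  · exact Finset.sum_congr rfl fun j hj => by
      rw [Finset.card_image_of_injective _ (fun a b hab => (Prod.ext_iff.1 (Prod.ext_iff.1 hab).2).2),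
        Finset.card_range]
  · intro a _ b _ hab
    rw [Function.onFun, Finset.disjoint_left]
    rintro ⟨x1, x2, x3⟩ hx hy
    simp only [Finset.mem_image, Finset.mem_range, Prod.mk.injEq] at hx hy
    obtain ⟨u, _, hu1, hu2, _⟩ := hx
    obtain ⟨v, _, hv1, hv2, _⟩ := hy
    exact hab (by omega)

lemma card_G2 : (G2 d).card = ∑ j ∈ Finset.Icc 1 d, j := by
  unfold G2
  rw [Finset.card_biUnion]
  · exact Finset.sum_congr rfl fun j hj => by
      rw [Finset.card_image_of_injective _ (fun a b hab => (Prod.ext_iff.1 hab).1),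
        Finset.card_range]
  · intro a _ b _ hab
    rw [Function.onFun, Finset.disjoint_left]
    rintro ⟨x1, x2, x3⟩ hx hy
    simp only [Finset.mem_image, Finset.mem_range, Prod.mk.injEq] at hx hy
    obtain ⟨u, _, _, hu2, _⟩ := hx
    obtain ⟨v, _, _, hv2, _⟩ := hy
    exact hab (by omega)

lemma card_G3 : (G3 d).card = ∑ j ∈ Finset.Icc 1 d, (d - j) := by
  unfold G3
  rw [Finset.card_biUnion]
  · refine Finset.sum_congr rfl fun j hj => ?_
    rw [Finset.card_image_of_injective _ (fun a b hab => (Prod.ext_iff.1 hab).1),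
      Nat.card_Icc]
    omega
  · intro a _ b _ hab
    rw [Function.onFun, Finset.disjoint_left]
    rintro ⟨x1, x2, x3⟩ hx hy
    simp only [Finset.mem_image, Finset.mem_Icc, Prod.mk.injEq] at hx hy
    obtain ⟨u, _, _, hu2, _⟩ := hx
    obtain ⟨v, _, _, hv2, _⟩ := hy
    exact hab (by omega)

include hn in
lemma card_G4 :
    (G4 d n).card + (Finset.univ.filter fun k : Fin d => n k = 2).card = d := by
  unfold G4
  rw [Finset.card_image_of_injective _
    (fun a b hab => (Prod.ext_iff.1 hab).1)]
  have key : (Finset.univ.filter fun k : Fin d => n k = 2).card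
      = ((Finset.Icc 1 d).filter fun j => ¬ 3 ≤ next d n (j - 1)).card := by
    refine Finset.card_bij' (fun k _ => (k : ℕ) + 1)
      (fun j hj => ⟨j - 1, by
        have h1 := (Finset.mem_filter.1 hj).1
        rw [Finset.mem_Icc] at h1
        omega⟩) ?_ ?_ ?_ ?_
    · intro k hk
      rw [Finset.mem_filter] at hk ⊢
      refine ⟨Finset.mem_Icc.2 ⟨by omega, by have := k.isLt; omega⟩, ?_⟩
      have : next d n ((k : ℕ) + 1 - 1) = n k := by
        show next d n (k : ℕ) = n k
        rw [next_eq]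
      rw [this, hk.2]
      omega
    · intro j hj
      rw [Finset.mem_filter] at hj ⊢
      refine ⟨Finset.mem_univ _, ?_⟩
      have h1 := Finset.mem_Icc.1 hj.1
      have h2 := hj.2
      have hlt : j - 1 < d := by omega
      have h3 : next d n (j - 1) = n ⟨j - 1, hlt⟩ := dif_pos hlt
      have h4 := hn ⟨j - 1, hlt⟩
      show n ⟨j - 1, hlt⟩ = 2
      omega
    · intro k hk
      exact Fin.ext (by show (k : ℕ) + 1 - 1 = (k : ℕ); omega)
    · intro j hj
      have h1 := (Finset.mem_filter.1 hj).1
      rw [Finset.mem_Icc] at h1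
      show j - 1 + 1 = j
      omega
  rw [key]
  have := Finset.card_filter_add_card_filter_not
    (s := Finset.Icc 1 d) (p := fun j => 3 ≤ next d n (j - 1))
  rw [Nat.card_Icc] at this
  omega

include hn in
lemma card_GG (hd : 1 ≤ d) :
    (GG d n).card + (Finset.univ.filter fun k : Fin d => n k = 2).card
      = (d + 1) ^ 2 + d * (d + 1) / 2 := by
  have hdisj01 : Disjoint (G0 d) (G1 d ∪ (G2 d ∪ (G3 d ∪ G4 d n))) := by
    rw [Finset.disjoint_left]
    rintro ⟨i, j, h⟩ ht hu
    rw [mem_G0] at ht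
    simp only [Finset.mem_union, mem_G1, mem_G2, mem_G3, mem_G4] at hu
    rcases hu with hc | hc | hc | hc <;> · have := hc.1; omega
  have hdisj12 : Disjoint (G1 d) (G2 d ∪ (G3 d ∪ G4 d n)) := by
    rw [Finset.disjoint_left]
    rintro ⟨i, j, h⟩ ht hu
    rw [mem_G1] at ht
    simp only [Finset.mem_union, mem_G2, mem_G3, mem_G4] at hu
    rcases hu with ⟨_, _, h3, h4⟩ | ⟨_, _, h3, _, h5⟩ | ⟨_, _, h3, h4, _⟩ <;> omega
  have hdisj23 : Disjoint (G2 d) (G3 d ∪ G4 d n) := by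
    rw [Finset.disjoint_left]
    rintro ⟨i, j, h⟩ ht hu
    rw [mem_G2] at ht
    simp only [Finset.mem_union, mem_G3, mem_G4] at hu
    rcases hu with ⟨_, _, h3, _, h5⟩ | ⟨_, _, h3, h4, _⟩ <;> omega
  have hdisj34 : Disjoint (G3 d) (G4 d n) := by
    rw [Finset.disjoint_left]
    rintro ⟨i, j, h⟩ ht hu
    rw [mem_G3] at ht
    rw [mem_G4] at hu
    obtain ⟨_, _, h3, h4, _⟩ := hu
    omega
  have hcard : (GG d n).card =
      (G0 d).card + ((G1 d).card + ((G2 d).card + ((G3 d).card + (G4 d n).card))) := by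
    rw [GG_eq, Finset.card_union_of_disjoint hdisj01,
      Finset.card_union_of_disjoint hdisj12, Finset.card_union_of_disjoint hdisj23,
      Finset.card_union_of_disjoint hdisj34]
  rw [hcard, card_G0, card_G1, card_G2, card_G3]
  have h4 := card_G4 hn
  have hs1 := sum_Icc_mul_two d
  have hs3 := sum_Icc_sub_mul_two d
  obtain ⟨e, rfl⟩ : ∃ e, d = e + 1 := ⟨d - 1, by omega⟩
  have q1 : (e + 1) * (e + 1 + 1) = e * e + 3 * e + 2 := by ring
  have q2 : (e + 1 + 1) ^ 2 = e * e + 4 * e + 4 := by ring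
  have q3 : (e + 1) * (e + 1 - 1) = e * e + e := by
    have : e + 1 - 1 = e := rfl
    rw [this]; ring
  omega

end scratch

end WreathAux

/-- For the scheme `K_{n_1} ≀ ⋯ ≀ K_{n_d}`, the space `T₀`
spanned by the triple products has dimension `(d+1)^2 + d(d+1)/2 - b`,
where `b` is the number of factors with `n_k = 2`; in particular
`(d+1)^2 + d(d-1)/2 ≤ dim T₀ ≤ (d+1)^2 + d(d+1)/2`. -/
theorem dim_T0_wreath (d : ℕ) (hd : 1 ≤ d) (n : Fin d → ℕ) (hn : ∀ k, 2 ≤ n k) :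
    Module.finrank ℂ ↥(wT0 d n hn) =
        (d + 1) ^ 2 + d * (d + 1) / 2 -
          (Finset.univ.filter fun k : Fin d => n k = 2).card ∧
      (d + 1) ^ 2 + d * (d - 1) / 2 ≤ Module.finrank ℂ ↥(wT0 d n hn) ∧
      Module.finrank ℂ ↥(wT0 d n hn) ≤ (d + 1) ^ 2 + d * (d + 1) / 2 := by
  have hrank := WreathAux.finrank_T0 (d := d) (n := n) hn
  have hcard := WreathAux.card_GG hn hd
  have hb : (Finset.univ.filter fun k : Fin d => n k = 2).card ≤ d := by
    have h1 := Finset.card_filter_le (Finset.univ : Finset (Fin d))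
      (fun k => n k = 2)
    simpa using h1
  obtain ⟨e, rfl⟩ : ∃ e, d = e + 1 := ⟨d - 1, by omega⟩
  rw [hrank]
  have q1 : (e + 1) * (e + 1 + 1) = e * e + 3 * e + 2 := by ring
  have q2 : (e + 1 + 1) ^ 2 = e * e + 4 * e + 4 := by ring
  have q3 : (e + 1) * (e + 1 - 1) = e * e + e := by
    rw [show e + 1 - 1 = e from rfl]; ring
  refine ⟨by omega, by omega, by omega⟩
end
end

section
/- For the scheme K_{n_1} ≀ K_{n_2} ≀ ⋯ ≀ K_{n_d} and every h with 0 ≤ h ≤ d, one has the matrix identity A_h E_h^* = Σ_{j=0}^{h} E_j^* A_h E_h^*. -/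
open scoped Classical

noncomputable section

section Aux
variable (d : ℕ) (n : Fin d → ℕ) (hn : ∀ k, 2 ≤ n k)

lemma wE_mul_apply (i : ℕ)
    (M : Matrix (∀ k : Fin d, Fin (n k)) (∀ k : Fin d, Fin (n k)) ℂ)
    (x y : ∀ k : Fin d, Fin (n k)) :
    (wE d n hn i * M) x y =
      (if wRel d n i (wBase d n hn) x then 1 else 0) * M x y := by
  rw [Matrix.mul_apply, Finset.sum_eq_single x]
  · by_cases hr : wRel d n i (wBase d n hn) x <;> simp [wE, hr]
  · intro b _ hb
    have : x ≠ b := fun e => hb e.symm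
    simp [wE, this]
  · simp

lemma mul_wE_apply (i : ℕ)
    (M : Matrix (∀ k : Fin d, Fin (n k)) (∀ k : Fin d, Fin (n k)) ℂ)
    (x y : ∀ k : Fin d, Fin (n k)) :
    (M * wE d n hn i) x y =
      M x y * (if wRel d n i (wBase d n hn) y then 1 else 0) := by
  rw [Matrix.mul_apply, Finset.sum_eq_single y]
  · by_cases hr : wRel d n i (wBase d n hn) y <;> simp [wE, hr]
  · intro b _ hb
    simp [wE, hb]
  · simp

lemma wRel_unique {i j : ℕ} (hi : i ≤ d) (hj : j ≤ d)
    {x : ∀ k : Fin d, Fin (n k)}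
    (h1 : wRel d n i (wBase d n hn) x) (h2 : wRel d n j (wBase d n hn) x) :
    i = j := by
  unfold wRel at h1 h2
  by_cases c1 : 1 ≤ i ∧ i ≤ d <;> by_cases c2 : 1 ≤ j ∧ j ≤ d
  · rw [dif_pos c1] at h1; rw [dif_pos c2] at h2
    have hij : i - 1 ≤ j - 1 := by
      by_contra hc
      exact h1.1 (h2.2 ⟨i - 1, by omega⟩ (by simpa using by omega))
    have hji : j - 1 ≤ i - 1 := by
      by_contra hc
      exact h2.1 (h1.2 ⟨j - 1, by omega⟩ (by simpa using by omega))
    omega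
  · rw [dif_pos c1] at h1; rw [dif_neg c2] at h2
    exact absurd (congrFun h2 ⟨i - 1, by omega⟩) h1.1
  · rw [dif_neg c1] at h1; rw [dif_pos c2] at h2
    exact absurd (congrFun h1 ⟨j - 1, by omega⟩) h2.1
  · omega

lemma wRel_exists {h : ℕ} (hh : h ≤ d) {x : ∀ k : Fin d, Fin (n k)}
    (H : ∀ k : Fin d, h ≤ (k : ℕ) → x k = wBase d n hn k) :
    ∃ j ≤ h, wRel d n j (wBase d n hn) x := by
  by_cases hx : x = wBase d n hn
  · refine ⟨0, Nat.zero_le _, ?_⟩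
    unfold wRel
    rw [dif_neg (by omega)]
    exact hx.symm
  · set s : Finset (Fin d) := Finset.univ.filter (fun k => x k ≠ wBase d n hn k) with hs
    have hsne : s.Nonempty := by
      by_contra hc
      apply hx
      funext k
      by_contra hk
      exact hc ⟨k, by simp [hs, hk]⟩
    set m := s.max' hsne with hm
    have hms : m ∈ s := s.max'_mem hsne
    have hmx : x m ≠ wBase d n hn m := by simpa [hs] using hms
    have hmh : (m : ℕ) < h := by
      by_contra hc
      exact hmx (H m (by omega))
    refine ⟨(m : ℕ) + 1, by omega, ?_⟩
    unfold wRel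
    rw [dif_pos ⟨by omega, by have := m.isLt; omega⟩]
    constructor
    · intro e
      apply hmx
      have : (⟨(m : ℕ) + 1 - 1, by have := m.isLt; omega⟩ : Fin d) = m := by
        ext; simp
      rw [this] at e
      exact e.symm
    · intro k hk
      by_contra hne
      have hks : k ∈ s := by simp [hs]; exact fun e => hne e.symm
      have := s.le_max' k hks
      rw [← hm] at this
      have : (k : ℕ) ≤ (m : ℕ) := this
      omega

end Aux

/-- For the scheme `K_{n_1} ≀ ⋯ ≀ K_{n_d}` and every
`0 ≤ h ≤ d`, one has `A_h E_h^* = Σ_{j=0}^{h} E_j^* A_h E_h^*`. -/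
theorem AE_eq_sum_wreath (d : ℕ) (hd : 1 ≤ d) (n : Fin d → ℕ) (hn : ∀ k, 2 ≤ n k)
    (h : ℕ) (hh : h ≤ d) :
    wA d n h * wE d n hn h =
      ∑ j ∈ Finset.range (h + 1), wE d n hn j * wA d n h * wE d n hn h := by
  ext x y
  rw [Matrix.sum_apply, mul_wE_apply]
  have hterm : ∀ j, (wE d n hn j * wA d n h * wE d n hn h) x y =
      (if wRel d n j (wBase d n hn) x then 1 else 0) *
        ((wA d n h) x y * (if wRel d n h (wBase d n hn) y then 1 else 0)) := by
    intro j
    rw [mul_wE_apply, wE_mul_apply, mul_assoc]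
  simp only [hterm]
  by_cases K : wRel d n h x y ∧ wRel d n h (wBase d n hn) y
  · have hA : (wA d n h) x y = 1 := by simp [wA, K.1]
    rw [hA, if_pos K.2]
    have H : ∀ k : Fin d, h ≤ (k : ℕ) → x k = wBase d n hn k := by
      intro k hk
      obtain ⟨K1, K2⟩ := K
      unfold wRel at K1 K2
      by_cases ch : 1 ≤ h ∧ h ≤ d
      · rw [dif_pos ch] at K1 K2
        rw [K1.2 k (by omega), ← K2.2 k (by omega)]
      · rw [dif_neg ch] at K1 K2
        have h0 : h = 0 := by omega
        rw [K1, ← K2]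
    obtain ⟨j₀, hj₀h, hrel⟩ := wRel_exists d n hn hh H
    have key : ∀ j ∈ Finset.range (h + 1),
        ((if wRel d n j (wBase d n hn) x then 1 else 0) * (1 * 1) : ℂ) =
          if j = j₀ then 1 else 0 := by
      intro j hj
      have hjd : j ≤ d := by have := Finset.mem_range.mp hj; omega
      by_cases hr : wRel d n j (wBase d n hn) x
      · rw [if_pos hr, if_pos (wRel_unique d n hn hjd (le_trans hj₀h hh) hr hrel)]
        ring
      · rw [if_neg hr, if_neg (fun e => hr (by rw [e]; exact hrel))]
        ring
    rw [Finset.sum_congr rfl key, Finset.sum_ite_eq' (Finset.range (h + 1)),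
      if_pos (Finset.mem_range.mpr (by omega))]
    ring
  · rcases not_and_or.mp K with K1 | K2
    · have hA : (wA d n h) x y = 0 := by simp [wA, K1]
      simp [hA]
    · rw [if_neg K2]
      simp
end
end

section
/- For the scheme K_{n_1} ≀ K_{n_2} ≀ ⋯ ≀ K_{n_d}: (a) for all i, h with 0 ≤ i < h ≤ d, A_i E_h^* = E_h^* A_i E_h^*; and (b) for all i, h with 0 ≤ h < i ≤ d, A_i E_h^* = E_i^* A_i E_h^*. -/
open scoped Classical

noncomputable section

lemma mulE_apply (d : ℕ) (n : Fin d → ℕ) (hn : ∀ k, 2 ≤ n k)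
    (M : Matrix (∀ k : Fin d, Fin (n k)) (∀ k : Fin d, Fin (n k)) ℂ) (h : ℕ)
    (x z : ∀ k : Fin d, Fin (n k)) :
    (M * wE d n hn h) x z
      = M x z * (if wRel d n h (wBase d n hn) z then 1 else 0) := by
  rw [Matrix.mul_apply]
  rw [Finset.sum_eq_single z]
  · simp [wE]
  · intro y _ hy
    simp [wE, hy]
  · simp

lemma Emul_apply (d : ℕ) (n : Fin d → ℕ) (hn : ∀ k, 2 ≤ n k)
    (M : Matrix (∀ k : Fin d, Fin (n k)) (∀ k : Fin d, Fin (n k)) ℂ) (h : ℕ)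
    (x z : ∀ k : Fin d, Fin (n k)) :
    (wE d n hn h * M) x z
      = (if wRel d n h (wBase d n hn) x then 1 else 0) * M x z := by
  rw [Matrix.mul_apply]
  rw [Finset.sum_eq_single x]
  · simp [wE]
  · intro y _ hy
    simp [wE]
    tauto
  · simp

lemma rel_a (d : ℕ) (n : Fin d → ℕ) (hn : ∀ k, 2 ≤ n k) (i h : ℕ)
    (hih : i < h) (hhd : h ≤ d) (x z : ∀ k : Fin d, Fin (n k))
    (hx : wRel d n i x z) (hz : wRel d n h (wBase d n hn) z) :
    wRel d n h (wBase d n hn) x := by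
  have hh : 1 ≤ h ∧ h ≤ d := ⟨by omega, hhd⟩
  rw [wRel, dif_pos hh] at hz ⊢
  by_cases hi : 1 ≤ i ∧ i ≤ d
  · rw [wRel, dif_pos hi] at hx
    have key : ∀ k : Fin d, h - 1 ≤ (k : ℕ) → x k = z k := fun k hk =>
      hx.2 k (by omega)
    constructor
    · rw [key ⟨h - 1, by omega⟩ (le_refl _)]; exact hz.1
    · intro k hk; rw [key k (by omega)]; exact hz.2 k hk
  · rw [wRel, dif_neg hi] at hx
    subst hx; exact hz

lemma rel_b (d : ℕ) (n : Fin d → ℕ) (hn : ∀ k, 2 ≤ n k) (i h : ℕ)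
    (hhi : h < i) (hid : i ≤ d) (x z : ∀ k : Fin d, Fin (n k))
    (hx : wRel d n i x z) (hz : wRel d n h (wBase d n hn) z) :
    wRel d n i (wBase d n hn) x := by
  have hi : 1 ≤ i ∧ i ≤ d := ⟨by omega, hid⟩
  rw [wRel, dif_pos hi] at hx ⊢
  have hzcoord : ∀ k : Fin d, i - 1 ≤ (k : ℕ) → z k = wBase d n hn k := by
    by_cases hh : 1 ≤ h ∧ h ≤ d
    · rw [wRel, dif_pos hh] at hz
      intro k hk; exact (hz.2 k (by omega)).symm
    · rw [wRel, dif_neg hh] at hz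
      subst hz; intro _ _; rfl
  constructor
  · rw [hzcoord ⟨i - 1, by omega⟩ (le_refl _)] at hx
    exact fun hc => hx.1 hc.symm
  · intro k hk
    rw [← hzcoord k (by omega)]
    exact (hx.2 k hk).symm

/-- For the scheme `K_{n_1} ≀ ⋯ ≀ K_{n_d}`:
(a) for `0 ≤ i < h ≤ d`, `A_i E_h^* = E_h^* A_i E_h^*`; and
(b) for `0 ≤ h < i ≤ d`, `A_i E_h^* = E_i^* A_i E_h^*`. -/
theorem AE_triple_wreath (d : ℕ) (hd : 1 ≤ d) (n : Fin d → ℕ) (hn : ∀ k, 2 ≤ n k) :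
    (∀ i h : ℕ, i < h → h ≤ d →
        wA d n i * wE d n hn h = wE d n hn h * wA d n i * wE d n hn h) ∧
      (∀ i h : ℕ, h < i → i ≤ d →
        wA d n i * wE d n hn h = wE d n hn i * wA d n i * wE d n hn h) := by
  constructor
  · intro i h hih hhd
    ext x z
    rw [mulE_apply, mulE_apply, Emul_apply]
    by_cases hz : wRel d n h (wBase d n hn) z
    · by_cases hxz : wRel d n i x z
      · rw [if_pos (rel_a d n hn i h hih hhd x z hxz hz)]; ring
      · simp [wA, hxz]
    · simp [hz]
  · intro i h hhi hid
    ext x z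
    rw [mulE_apply, mulE_apply, Emul_apply]
    by_cases hz : wRel d n h (wBase d n hn) z
    · by_cases hxz : wRel d n i x z
      · rw [if_pos (rel_b d n hn i h hhi hid x z hxz hz)]; ring
      · simp [wA, hxz]
    · simp [hz]
end
end

section
/- For the scheme K_{n_1} ≀ K_{n_2} ≀ ⋯ ≀ K_{n_d} and all indices i, j, h with 1 ≤ h ≤ d, i > h, j > h and i ≠ j, one has the matrix identity A_i E_h^* A_j = (n_h − 1)(∏_{k=1}^{h−1} n_k) · Σ_{r=0}^{d} E_i^* A_r E_j^*. -/
open scoped Classical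

noncomputable section

section Helpers

variable {d : ℕ} {n : Fin d → ℕ}

lemma wRel_iff {i : ℕ} (h1 : 1 ≤ i) (h2 : i ≤ d) (hi : i - 1 < d)
    (x y : ∀ k : Fin d, Fin (n k)) :
    wRel d n i x y ↔
      (x ⟨i - 1, hi⟩ ≠ y ⟨i - 1, hi⟩ ∧ ∀ k : Fin d, i - 1 < (k : ℕ) → x k = y k) := by
  rw [wRel, dif_pos ⟨h1, h2⟩]

lemma wRel_zero (x y : ∀ k : Fin d, Fin (n k)) : wRel d n 0 x y ↔ x = y := by
  simp [wRel]

lemma sum_rel_one (x y : ∀ k : Fin d, Fin (n k)) :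
    ∑ r ∈ Finset.range (d + 1), (if wRel d n r x y then (1:ℂ) else 0) = 1 := by
  by_cases hxy : x = y
  · subst hxy
    rw [Finset.sum_eq_single_of_mem 0 (Finset.mem_range.mpr (by omega))]
    · simp [wRel]
    · intro r hr hr0
      have h1 : 1 ≤ r := by omega
      have h2 : r ≤ d := by have := Finset.mem_range.mp hr; omega
      have : ¬ wRel d n r x x := by
        rw [wRel_iff h1 h2 (by omega)]; simp
      simp [this]
  · have hex : (Finset.univ.filter fun k : Fin d => x k ≠ y k).Nonempty := by
      rw [Finset.filter_nonempty_iff]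
      by_contra hc; push_neg at hc
      exact hxy (funext fun k => hc k (Finset.mem_univ k))
    set m := (Finset.univ.filter fun k : Fin d => x k ≠ y k).max' hex with hm
    have hmne : x m ≠ y m :=
      (Finset.mem_filter.mp ((Finset.univ.filter fun k : Fin d => x k ≠ y k).max'_mem hex)).2
    have hmax : ∀ k : Fin d, x k ≠ y k → k ≤ m := fun k hk =>
      Finset.le_max' _ k (Finset.mem_filter.mpr ⟨Finset.mem_univ k, hk⟩)
    have h2 : (m:ℕ) + 1 ≤ d := by have := m.isLt; omega
    have hfin : (⟨(m:ℕ) + 1 - 1, by omega⟩ : Fin d) = m := by ext; simp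
    have hrel : wRel d n ((m:ℕ)+1) x y := by
      rw [wRel_iff (by omega) h2 (by omega)]
      refine ⟨by rw [hfin]; exact hmne, fun k hk => ?_⟩
      by_contra hne
      have := hmax k hne
      rw [Fin.le_def] at this
      omega
    rw [Finset.sum_eq_single_of_mem ((m:ℕ)+1) (Finset.mem_range.mpr (by omega))]
    · rw [if_pos hrel]
    · intro r hr hrne
      rw [if_neg]
      intro hrel'
      rcases Nat.eq_zero_or_pos r with h0 | hpos
      · subst h0; rw [wRel_zero] at hrel'; exact hxy hrel'
      · have h2' : r ≤ d := by have := Finset.mem_range.mp hr; omega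
        rw [wRel_iff hpos h2' (by omega)] at hrel'
        obtain ⟨hne, hab⟩ := hrel'
        have hle : r - 1 ≤ (m:ℕ) := by
          have := hmax _ hne
          rw [Fin.le_def] at this
          simpa using this
        have hge : (m:ℕ) ≤ r - 1 := by
          by_contra hlt
          exact hmne (hab m (by omega))
        omega

lemma rel_base_left (hn : ∀ k, 2 ≤ n k) {i h : ℕ} (hh1 : 1 ≤ h) (hhd : h ≤ d)
    (hhi : h < i) (hid : i ≤ d) {x z : ∀ k : Fin d, Fin (n k)}
    (hz : wRel d n h (wBase d n hn) z) :
    wRel d n i x z ↔ wRel d n i (wBase d n hn) x := by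
  have hlth : h - 1 < d := by omega
  have hlti : i - 1 < d := by omega
  rw [wRel_iff hh1 hhd hlth] at hz
  rw [wRel_iff (by omega) hid hlti, wRel_iff (by omega) hid hlti]
  have hzi : z ⟨i-1, hlti⟩ = wBase d n hn ⟨i-1, hlti⟩ :=
    (hz.2 ⟨i-1, hlti⟩ (by simp; omega)).symm
  constructor
  · rintro ⟨hne, hall⟩
    refine ⟨fun hc => hne (hc.symm.trans hzi.symm), fun k hk => ?_⟩
    exact (hz.2 k (by omega)).trans (hall k hk).symm
  · rintro ⟨hne, hall⟩
    refine ⟨fun hc => hne (hzi.symm.trans hc.symm), fun k hk => ?_⟩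
    exact ((hall k hk).symm.trans (hz.2 k (by omega)))

lemma rel_base_right (hn : ∀ k, 2 ≤ n k) {j h : ℕ} (hh1 : 1 ≤ h) (hhd : h ≤ d)
    (hhj : h < j) (hjd : j ≤ d) {y z : ∀ k : Fin d, Fin (n k)}
    (hz : wRel d n h (wBase d n hn) z) :
    wRel d n j z y ↔ wRel d n j (wBase d n hn) y := by
  have hlth : h - 1 < d := by omega
  have hltj : j - 1 < d := by omega
  rw [wRel_iff hh1 hhd hlth] at hz
  rw [wRel_iff (by omega) hjd hltj, wRel_iff (by omega) hjd hltj]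
  have hzj : z ⟨j-1, hltj⟩ = wBase d n hn ⟨j-1, hltj⟩ :=
    (hz.2 ⟨j-1, hltj⟩ (by simp; omega)).symm
  constructor
  · rintro ⟨hne, hall⟩
    refine ⟨fun hc => hne (hzj.trans hc), fun k hk => ?_⟩
    exact (hz.2 k (by omega)).trans (hall k hk)
  · rintro ⟨hne, hall⟩
    refine ⟨fun hc => hne (hzj ▸ hc), fun k hk => ?_⟩
    exact (hz.2 k (by omega)).symm.trans (hall k hk)

lemma count_sphere (hn : ∀ k, 2 ≤ n k) (h : ℕ) (hh1 : 1 ≤ h) (hhd : h ≤ d) (hlt : h - 1 < d) :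
    ∑ z : ∀ k : Fin d, Fin (n k), (if wRel d n h (wBase d n hn) z then (1:ℂ) else 0) =
      ((n ⟨h - 1, hlt⟩ : ℂ) - 1) *
        ∏ l ∈ Finset.univ.filter (fun l : Fin d => (l : ℕ) < h - 1), (n l : ℂ) := by
  have hrep : ∀ z : ∀ k : Fin d, Fin (n k),
      (if wRel d n h (wBase d n hn) z then (1:ℂ) else 0) =
      ∏ k : Fin d,
        (if (k:ℕ) < h - 1 then (1:ℂ)
         else if (k:ℕ) = h - 1 then (if z k = wBase d n hn k then 0 else 1)
         else (if z k = wBase d n hn k then 1 else 0)) := by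
    intro z
    rw [wRel_iff hh1 hhd hlt]
    by_cases hrel : (wBase d n hn) ⟨h-1,hlt⟩ ≠ z ⟨h-1,hlt⟩ ∧
        ∀ k : Fin d, h - 1 < (k:ℕ) → (wBase d n hn) k = z k
    · rw [if_pos hrel]
      symm
      apply Finset.prod_eq_one
      intro k _
      rcases lt_trichotomy ((k:ℕ)) (h-1) with hk | hk | hk
      · rw [if_pos hk]
      · have hkeq : k = ⟨h-1, hlt⟩ := Fin.ext hk
        rw [if_neg (by omega), if_pos hk, if_neg]
        rw [hkeq]
        exact fun hc => hrel.1 hc.symm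
      · rw [if_neg (by omega), if_neg (by omega), if_pos (hrel.2 k hk).symm]
    · rw [if_neg hrel]
      symm
      push_neg at hrel
      by_cases hb : (wBase d n hn) ⟨h-1,hlt⟩ = z ⟨h-1,hlt⟩
      · apply Finset.prod_eq_zero (Finset.mem_univ (⟨h-1,hlt⟩ : Fin d))
        rw [if_neg (by simp), if_pos (by simp), if_pos hb.symm]
      · obtain ⟨k, hk1, hk2⟩ := hrel hb
        apply Finset.prod_eq_zero (Finset.mem_univ k)
        rw [if_neg (by omega), if_neg (by omega), if_neg (fun hc => hk2 hc.symm)]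
  simp only [hrep]
  rw [← Fintype.prod_sum (fun (k : Fin d) (a : Fin (n k)) =>
    if (k:ℕ) < h - 1 then (1:ℂ)
    else if (k:ℕ) = h - 1 then (if a = wBase d n hn k then 0 else 1)
    else (if a = wBase d n hn k then 1 else 0))]
  have hstep : ∀ k : Fin d,
      (∑ a : Fin (n k),
        (if (k:ℕ) < h - 1 then (1:ℂ)
         else if (k:ℕ) = h - 1 then (if a = wBase d n hn k then 0 else 1)
         else (if a = wBase d n hn k then 1 else 0))) =
      (if k = (⟨h-1, hlt⟩ : Fin d) then (n k : ℂ) - 1 else 1) *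
        (if (k:ℕ) < h - 1 then (n k : ℂ) else 1) := by
    intro k
    rcases lt_trichotomy ((k:ℕ)) (h-1) with hk | hk | hk
    · have hkne : k ≠ (⟨h-1, hlt⟩ : Fin d) := by
        intro hc; rw [hc] at hk; simp at hk
      simp only [if_pos hk, if_neg hkne]
      rw [Finset.sum_const, Finset.card_univ, Fintype.card_fin]
      simp
    · have hkeq : k = ⟨h-1, hlt⟩ := Fin.ext hk
      simp only [if_neg (by omega : ¬ ((k:ℕ) < h - 1)), if_pos hk, if_pos hkeq]
      rw [mul_one]
      have hsplit : ∀ a : Fin (n k), (if a = wBase d n hn k then (0:ℂ) else 1)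
          = 1 - (if a = wBase d n hn k then 1 else 0) := by
        intro a; split_ifs <;> ring
      simp only [hsplit]
      rw [Finset.sum_sub_distrib, Finset.sum_const, Finset.card_univ, Fintype.card_fin,
        Finset.sum_ite_eq' Finset.univ (wBase d n hn k) (fun _ => (1:ℂ))]
      simp
    · have hkne : k ≠ (⟨h-1, hlt⟩ : Fin d) := by
        intro hc; rw [hc] at hk; simp at hk
      simp only [if_neg (by omega : ¬ ((k:ℕ) < h - 1)), if_neg (by omega : ¬ ((k:ℕ) = h - 1)),
        if_neg hkne]
      rw [Finset.sum_ite_eq' Finset.univ (wBase d n hn k) (fun _ => (1:ℂ))]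
      simp
  rw [Finset.prod_congr rfl (fun k _ => hstep k), Finset.prod_mul_distrib]
  rw [Finset.prod_ite_eq' Finset.univ (⟨h-1, hlt⟩ : Fin d) (fun k => (n k : ℂ) - 1)]
  rw [← Finset.prod_filter]
  simp
lemma wE_diag (hn : ∀ k, 2 ≤ n k) (i : ℕ) :
    wE d n hn i =
      Matrix.diagonal fun z => if wRel d n i (wBase d n hn) z then (1:ℂ) else 0 := by
  ext y z
  by_cases hyz : y = z
  · subst hyz; simp [wE]
  · simp [wE, Matrix.diagonal_apply_ne _ hyz, hyz]

end Helpers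

/-- For the scheme `K_{n_1} ≀ ⋯ ≀ K_{n_d}` and indices with
`1 ≤ h ≤ d`, `i > h`, `j > h`, `i ≠ j` (and `i, j ≤ d`),
`A_i E_h^* A_j = (n_h - 1)(∏_{k=1}^{h-1} n_k) Σ_{r=0}^{d} E_i^* A_r E_j^*`. -/
theorem AEA_above_wreath (d : ℕ) (hd : 1 ≤ d) (n : Fin d → ℕ) (hn : ∀ k, 2 ≤ n k)
    (i j h : ℕ) (hh1 : 1 ≤ h) (hhd : h ≤ d)
    (hhi : h < i) (hhj : h < j) (hij : i ≠ j) (hid : i ≤ d) (hjd : j ≤ d) :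
    wA d n i * wE d n hn h * wA d n j =
      (((n ⟨h - 1, by omega⟩ : ℂ) - 1) *
          ∏ l ∈ Finset.univ.filter (fun l : Fin d => (l : ℕ) < h - 1), (n l : ℂ)) •
        ∑ r ∈ Finset.range (d + 1), wE d n hn i * wA d n r * wE d n hn j := by
  have hlth : h - 1 < d := by omega
  ext x y
  rw [Matrix.mul_assoc]
  simp only [wE_diag hn, Matrix.smul_apply, Matrix.sum_apply,
    Matrix.diagonal_mul, Matrix.mul_diagonal, smul_eq_mul]
  rw [Matrix.mul_apply]
  simp only [Matrix.diagonal_mul, wA, Matrix.of_apply]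
  have hRHS : ∑ r ∈ Finset.range (d+1),
      ((if wRel d n i (wBase d n hn) x then (1:ℂ) else 0) * if wRel d n r x y then 1 else 0) *
        (if wRel d n j (wBase d n hn) y then 1 else 0)
      = (if wRel d n i (wBase d n hn) x then (1:ℂ) else 0) *
        (if wRel d n j (wBase d n hn) y then 1 else 0) := by
    rw [← Finset.sum_mul, ← Finset.mul_sum, sum_rel_one, mul_one]
  rw [hRHS]
  by_cases hP : wRel d n i (wBase d n hn) x
  · by_cases hQ : wRel d n j (wBase d n hn) y
    · have hz : ∀ z : ∀ k : Fin d, Fin (n k),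
          ((if wRel d n i x z then (1:ℂ) else 0) *
            ((if wRel d n h (wBase d n hn) z then 1 else 0) * if wRel d n j z y then 1 else 0))
          = (if wRel d n h (wBase d n hn) z then 1 else 0) := by
        intro z
        by_cases hzz : wRel d n h (wBase d n hn) z
        · rw [if_pos hzz, if_pos ((rel_base_left hn hh1 hhd hhi hid hzz).mpr hP),
            if_pos ((rel_base_right hn hh1 hhd hhj hjd hzz).mpr hQ)]
          ring
        · rw [if_neg hzz]; ring
      simp only [hz]
      rw [count_sphere hn h hh1 hhd hlth, if_pos hP, if_pos hQ]
      ring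
    · rw [if_neg hQ, mul_zero, mul_zero]
      apply Finset.sum_eq_zero
      intro z _
      by_cases hzz : wRel d n h (wBase d n hn) z
      · rw [if_neg (fun hc => hQ ((rel_base_right hn hh1 hhd hhj hjd hzz).mp hc))]
        ring
      · rw [if_neg hzz]; ring
  · rw [if_neg hP, zero_mul, mul_zero]
    apply Finset.sum_eq_zero
    intro z _
    by_cases hzz : wRel d n h (wBase d n hn) z
    · rw [if_neg (fun hc => hP ((rel_base_left hn hh1 hhd hhi hid hzz).mp hc))]
      ring
    · rw [if_neg hzz]; ring
end
end

section
/- For the scheme K_{n_1} ≀ K_{n_2} ≀ ⋯ ≀ K_{n_d}, the Terwilliger algebra coincides with the linear span of the triple products: the underlying set of the subalgebra T of Matrix X X ℂ equals T_0. Equivalently, for all 0 ≤ i, j, h ≤ d the matrix A_i E_h^* A_j lies in T_0 (the scheme is triply regular). -/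
open scoped Classical

noncomputable section

namespace TriplyRegAux

variable {d : ℕ} {n : Fin d → ℕ}

/-- The "type" of a pair: `0` if equal, otherwise (largest differing coordinate)+1. -/
def typ (x y : ∀ k : Fin d, Fin (n k)) : ℕ :=
  (Finset.univ.filter fun k : Fin d => x k ≠ y k).sup fun k => (k : ℕ) + 1

/-- Agreement above a threshold. -/
def agr (m : ℕ) (x y : ∀ k : Fin d, Fin (n k)) : Prop :=
  ∀ k : Fin d, m ≤ (k : ℕ) → x k = y k

lemma agr_symm {m : ℕ} {x y : ∀ k : Fin d, Fin (n k)} (h : agr m x y) : agr m y x :=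
  fun k hk => (h k hk).symm

lemma agr_trans {m : ℕ} {x y z : ∀ k : Fin d, Fin (n k)} (h1 : agr m x y) (h2 : agr m y z) :
    agr m x z := fun k hk => (h1 k hk).trans (h2 k hk)

lemma agr_mono {m m' : ℕ} (h : m ≤ m') {x y : ∀ k : Fin d, Fin (n k)} (ha : agr m x y) :
    agr m' x y := fun k hk => ha k (le_trans h hk)

lemma typ_le_iff {x y : ∀ k : Fin d, Fin (n k)} {m : ℕ} : typ x y ≤ m ↔ agr m x y := by
  constructor
  · intro h k hk
    by_contra hne
    have hmem : k ∈ Finset.univ.filter fun k : Fin d => x k ≠ y k := by simp [hne]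
    have := (Finset.le_sup (f := fun k : Fin d => (k : ℕ) + 1) hmem).trans h
    omega
  · intro h
    refine Finset.sup_le ?_
    intro k hk
    simp only [Finset.mem_filter, Finset.mem_univ, true_and] at hk
    by_contra hlt
    exact hk (h k (by omega))

lemma typ_le_d {x y : ∀ k : Fin d, Fin (n k)} : typ x y ≤ d :=
  typ_le_iff.mpr (fun k hk => absurd k.isLt (by omega))

lemma typ_eq_zero_iff {x y : ∀ k : Fin d, Fin (n k)} : typ x y = 0 ↔ x = y := by
  rw [← Nat.le_zero, typ_le_iff]
  constructor
  · intro h; funext k; exact h k (Nat.zero_le _)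
  · rintro rfl k _; rfl

lemma typ_spec {x y : ∀ k : Fin d, Fin (n k)} (h : typ x y ≠ 0) :
    ∃ k : Fin d, x k ≠ y k ∧ (k : ℕ) + 1 = typ x y := by
  have hne : (Finset.univ.filter fun k : Fin d => x k ≠ y k).Nonempty := by
    by_contra hemp
    rw [Finset.not_nonempty_iff_eq_empty] at hemp
    exact h (by simp [typ, hemp])
  obtain ⟨k, hk, hsup⟩ := Finset.exists_mem_eq_sup _ hne fun k : Fin d => (k : ℕ) + 1
  refine ⟨k, ?_, hsup.symm⟩
  simpa using hk

lemma eq_at_iff {x y : ∀ k : Fin d, Fin (n k)} (k : Fin d) (h : agr ((k : ℕ) + 1) x y) :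
    x k = y k ↔ typ x y ≤ (k : ℕ) := by
  rw [typ_le_iff]
  constructor
  · intro hxy j hj
    rcases Nat.lt_or_ge (j : ℕ) ((k : ℕ) + 1) with hj' | hj'
    · have hjk : j = k := Fin.ext (by omega)
      rw [hjk]; exact hxy
    · exact h j hj'
  · intro ha; exact ha k le_rfl

lemma wRel_iff_typ {i : ℕ} (hi : i ≤ d) {x y : ∀ k : Fin d, Fin (n k)} :
    wRel d n i x y ↔ typ x y = i := by
  unfold wRel
  by_cases h : 1 ≤ i ∧ i ≤ d
  · rw [dif_pos h]
    constructor
    · rintro ⟨hne, hagr⟩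
      have h1 : typ x y ≤ i := typ_le_iff.mpr (fun k hk => hagr k (by omega))
      have hmem : (⟨i - 1, by omega⟩ : Fin d) ∈
          Finset.univ.filter fun k : Fin d => x k ≠ y k := by simp [hne]
      have h2 : ((⟨i - 1, by omega⟩ : Fin d) : ℕ) + 1 ≤ typ x y :=
        Finset.le_sup (f := fun k : Fin d => (k : ℕ) + 1) hmem
      simp only [Fin.val_mk] at h2
      omega
    · intro ht
      have hne0 : typ x y ≠ 0 := by omega
      obtain ⟨k, hk, hksup⟩ := typ_spec hne0
      constructor
      · have hkk : (⟨i - 1, by omega⟩ : Fin d) = k := Fin.ext (by simp; omega)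
        rw [hkk]; exact hk
      · intro j hj
        exact typ_le_iff.mp (le_of_eq ht) j (by omega)
  · rw [dif_neg h]
    have hi0 : i = 0 := by omega
    rw [hi0]
    exact typ_eq_zero_iff.symm

/-! ### Permutations realizing prescribed partial maps -/

lemma swap_step {α : Type*} [DecidableEq α] (σ : Equiv.Perm α) {a b a' b' : α}
    (hab : σ a = b) (h : a' = a ↔ b' = b) : (Equiv.swap (σ a') b' * σ) a = b := by
  rw [Equiv.Perm.mul_apply, hab]
  by_cases h' : a' = a
  · rw [h', hab, h.mp h']
    exact Equiv.swap_apply_left b b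
  · have hb' : b' ≠ b := fun e => h' (h.mpr e)
    have hσ : σ a' ≠ b := fun e => h' (σ.injective (e.trans hab.symm))
    exact Equiv.swap_apply_of_ne_of_ne (Ne.symm hσ) (Ne.symm hb')

lemma exists_perm_three {α : Type*} [DecidableEq α] (a₁ a₂ a₃ b₁ b₂ b₃ : α)
    (h12 : a₁ = a₂ ↔ b₁ = b₂) (h13 : a₁ = a₃ ↔ b₁ = b₃) (h23 : a₂ = a₃ ↔ b₂ = b₃) :
    ∃ σ : Equiv.Perm α, σ a₁ = b₁ ∧ σ a₂ = b₂ ∧ σ a₃ = b₃ := by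
  have h1 : (Equiv.swap a₁ b₁) a₁ = b₁ := Equiv.swap_apply_left _ _
  set σ₁ := Equiv.swap a₁ b₁
  set σ₂ := Equiv.swap (σ₁ a₂) b₂ * σ₁ with hσ₂
  have h2 : σ₂ a₂ = b₂ := by
    rw [hσ₂, Equiv.Perm.mul_apply]; exact Equiv.swap_apply_left _ _
  have h1' : σ₂ a₁ = b₁ :=
    swap_step σ₁ h1 ⟨fun e => (h12.mp e.symm).symm, fun e => (h12.mpr e.symm).symm⟩
  set σ₃ := Equiv.swap (σ₂ a₃) b₃ * σ₂ with hσ₃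
  have h3 : σ₃ a₃ = b₃ := by
    rw [hσ₃, Equiv.Perm.mul_apply]; exact Equiv.swap_apply_left _ _
  have h2' : σ₃ a₂ = b₂ :=
    swap_step σ₂ h2 ⟨fun e => (h23.mp e.symm).symm, fun e => (h23.mpr e.symm).symm⟩
  have h1'' : σ₃ a₁ = b₁ :=
    swap_step σ₂ h1' ⟨fun e => (h13.mp e.symm).symm, fun e => (h13.mpr e.symm).symm⟩
  exact ⟨σ₃, h1'', h2', h3⟩

lemma exists_perm_cond {α : Type*} [DecidableEq α] (p q r : Prop) (a₁ b₁ a₂ b₂ a₃ b₃ : α)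
    (h12 : p → q → (a₁ = a₂ ↔ b₁ = b₂)) (h13 : p → r → (a₁ = a₃ ↔ b₁ = b₃))
    (h23 : q → r → (a₂ = a₃ ↔ b₂ = b₃)) :
    ∃ σ : Equiv.Perm α, (p → σ a₁ = b₁) ∧ (q → σ a₂ = b₂) ∧ (r → σ a₃ = b₃) := by
  by_cases hp : p <;> by_cases hq : q <;> by_cases hr : r
  · obtain ⟨σ, s1, s2, s3⟩ :=
      exists_perm_three a₁ a₂ a₃ b₁ b₂ b₃ (h12 hp hq) (h13 hp hr) (h23 hq hr)
    exact ⟨σ, fun _ => s1, fun _ => s2, fun _ => s3⟩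
  · obtain ⟨σ, s1, s2, _⟩ :=
      exists_perm_three a₁ a₂ a₂ b₁ b₂ b₂ (h12 hp hq) (h12 hp hq) (iff_of_true rfl rfl)
    exact ⟨σ, fun _ => s1, fun _ => s2, fun h => absurd h hr⟩
  · obtain ⟨σ, s1, _, s3⟩ :=
      exists_perm_three a₁ a₁ a₃ b₁ b₁ b₃ (iff_of_true rfl rfl) (h13 hp hr) (h13 hp hr)
    exact ⟨σ, fun _ => s1, fun h => absurd h hq, fun _ => s3⟩
  · obtain ⟨σ, s1, _, _⟩ := exists_perm_three a₁ a₁ a₁ b₁ b₁ b₁ (iff_of_true rfl rfl) (iff_of_true rfl rfl) (iff_of_true rfl rfl)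
    exact ⟨σ, fun _ => s1, fun h => absurd h hq, fun h => absurd h hr⟩
  · obtain ⟨σ, s2, _, s3⟩ :=
      exists_perm_three a₂ a₂ a₃ b₂ b₂ b₃ (iff_of_true rfl rfl) (h23 hq hr) (h23 hq hr)
    exact ⟨σ, fun h => absurd h hp, fun _ => s2, fun _ => s3⟩
  · obtain ⟨σ, s2, _, _⟩ := exists_perm_three a₂ a₂ a₂ b₂ b₂ b₂ (iff_of_true rfl rfl) (iff_of_true rfl rfl) (iff_of_true rfl rfl)
    exact ⟨σ, fun h => absurd h hp, fun _ => s2, fun h => absurd h hr⟩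
  · obtain ⟨σ, s3, _, _⟩ := exists_perm_three a₃ a₃ a₃ b₃ b₃ b₃ (iff_of_true rfl rfl) (iff_of_true rfl rfl) (iff_of_true rfl rfl)
    exact ⟨σ, fun h => absurd h hp, fun h => absurd h hq, fun _ => s3⟩
  · exact ⟨1, fun h => absurd h hp, fun h => absurd h hq, fun h => absurd h hr⟩

/-- A permutation realizing up to three conditional constraints, as a *function of the
truth values* `p q r` (so that it only depends on these propositions). -/
def permChoice {α : Type*} [DecidableEq α] (p q r : Prop) (a₁ b₁ a₂ b₂ a₃ b₃ : α) :
    Equiv.Perm α :=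
  if H : (p → q → (a₁ = a₂ ↔ b₁ = b₂)) ∧ (p → r → (a₁ = a₃ ↔ b₁ = b₃)) ∧
      (q → r → (a₂ = a₃ ↔ b₂ = b₃)) then
    (exists_perm_cond p q r a₁ b₁ a₂ b₂ a₃ b₃ H.1 H.2.1 H.2.2).choose
  else 1

lemma permChoice_spec {α : Type*} [DecidableEq α] {p q r : Prop} {a₁ b₁ a₂ b₂ a₃ b₃ : α}
    (h12 : p → q → (a₁ = a₂ ↔ b₁ = b₂)) (h13 : p → r → (a₁ = a₃ ↔ b₁ = b₃))
    (h23 : q → r → (a₂ = a₃ ↔ b₂ = b₃)) :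
    (p → permChoice p q r a₁ b₁ a₂ b₂ a₃ b₃ a₁ = b₁) ∧
      (q → permChoice p q r a₁ b₁ a₂ b₂ a₃ b₃ a₂ = b₂) ∧
      (r → permChoice p q r a₁ b₁ a₂ b₂ a₃ b₃ a₃ = b₃) := by
  simp only [permChoice, dif_pos (⟨h12, h13, h23⟩ :
    (p → q → (a₁ = a₂ ↔ b₁ = b₂)) ∧ (p → r → (a₁ = a₃ ↔ b₁ = b₃)) ∧
      (q → r → (a₂ = a₃ ↔ b₂ = b₃)))]
  exact (exists_perm_cond p q r a₁ b₁ a₂ b₂ a₃ b₃ h12 h13 h23).choose_spec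

/-! ### The type-preserving bijection -/

/-- Coordinate-wise permutation family used to build the type-preserving bijection. -/
def piFam (x₀ y z y' z' : ∀ k : Fin d, Fin (n k)) (k : Fin d)
    (u : ∀ j : Fin d, Fin (n j)) : Equiv.Perm (Fin (n k)) :=
  permChoice (agr ((k : ℕ) + 1) u x₀) (agr ((k : ℕ) + 1) u y) (agr ((k : ℕ) + 1) u z)
    (x₀ k) (x₀ k) (y k) (y' k) (z k) (z' k)

lemma piFam_local (x₀ y z y' z' : ∀ k : Fin d, Fin (n k)) (k : Fin d)
    {u v : ∀ j : Fin d, Fin (n j)} (huv : agr ((k : ℕ) + 1) u v) :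
    piFam x₀ y z y' z' k u = piFam x₀ y z y' z' k v := by
  unfold piFam
  have e1 : agr ((k : ℕ) + 1) u x₀ = agr ((k : ℕ) + 1) v x₀ :=
    propext ⟨fun h => agr_trans (agr_symm huv) h, fun h => agr_trans huv h⟩
  have e2 : agr ((k : ℕ) + 1) u y = agr ((k : ℕ) + 1) v y :=
    propext ⟨fun h => agr_trans (agr_symm huv) h, fun h => agr_trans huv h⟩
  have e3 : agr ((k : ℕ) + 1) u z = agr ((k : ℕ) + 1) v z :=
    propext ⟨fun h => agr_trans (agr_symm huv) h, fun h => agr_trans huv h⟩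
  rw [e1, e2, e3]

lemma exists_g (x₀ y z y' z' : ∀ k : Fin d, Fin (n k))
    (ha : typ x₀ y = typ x₀ y') (hb : typ y z = typ y' z') (hc : typ x₀ z = typ x₀ z') :
    ∃ g : (∀ k : Fin d, Fin (n k)) → (∀ k : Fin d, Fin (n k)),
      Function.Bijective g ∧ (∀ u v, typ (g u) (g v) = typ u v) ∧
        g x₀ = x₀ ∧ g y = y' ∧ g z = z' := by
  have H12 : ∀ (k : Fin d) (u : ∀ j : Fin d, Fin (n j)),
      agr ((k : ℕ) + 1) u x₀ → agr ((k : ℕ) + 1) u y → (x₀ k = y k ↔ x₀ k = y' k) := by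
    intro k u hp hq
    have hxy : agr ((k : ℕ) + 1) x₀ y := agr_trans (agr_symm hp) hq
    have hxy' : agr ((k : ℕ) + 1) x₀ y' := typ_le_iff.mp (ha ▸ typ_le_iff.mpr hxy)
    rw [eq_at_iff k hxy, eq_at_iff k hxy', ha]
  have H13 : ∀ (k : Fin d) (u : ∀ j : Fin d, Fin (n j)),
      agr ((k : ℕ) + 1) u x₀ → agr ((k : ℕ) + 1) u z → (x₀ k = z k ↔ x₀ k = z' k) := by
    intro k u hp hr
    have hxz : agr ((k : ℕ) + 1) x₀ z := agr_trans (agr_symm hp) hr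
    have hxz' : agr ((k : ℕ) + 1) x₀ z' := typ_le_iff.mp (hc ▸ typ_le_iff.mpr hxz)
    rw [eq_at_iff k hxz, eq_at_iff k hxz', hc]
  have H23 : ∀ (k : Fin d) (u : ∀ j : Fin d, Fin (n j)),
      agr ((k : ℕ) + 1) u y → agr ((k : ℕ) + 1) u z → (y k = z k ↔ y' k = z' k) := by
    intro k u hq hr
    have hyz : agr ((k : ℕ) + 1) y z := agr_trans (agr_symm hq) hr
    have hyz' : agr ((k : ℕ) + 1) y' z' := typ_le_iff.mp (hb ▸ typ_le_iff.mpr hyz)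
    rw [eq_at_iff k hyz, eq_at_iff k hyz', hb]
  have spec := fun (k : Fin d) (u : ∀ j : Fin d, Fin (n j)) =>
    permChoice_spec (H12 k u) (H13 k u) (H23 k u)
  set g : (∀ k : Fin d, Fin (n k)) → (∀ k : Fin d, Fin (n k)) :=
    fun u k => piFam x₀ y z y' z' k u (u k) with hg
  have key : ∀ (k : Fin d) (u v : ∀ j : Fin d, Fin (n j)), agr ((k : ℕ) + 1) u v →
      (g u k = g v k ↔ u k = v k) := by
    intro k u v huv
    simp only [hg]
    rw [piFam_local x₀ y z y' z' k huv]
    exact Equiv.apply_eq_iff_eq _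
  have gagr : ∀ (m : ℕ) (u v : ∀ j : Fin d, Fin (n j)), agr m u v → agr m (g u) (g v) := by
    intro m u v h k hk
    exact (key k u v (agr_mono (by omega) h)).mpr (h k hk)
  have gtyp : ∀ u v, typ (g u) (g v) = typ u v := by
    intro u v
    rcases Nat.eq_zero_or_pos (typ u v) with h0 | hpos
    · have huv : u = v := typ_eq_zero_iff.mp h0
      subst huv
      rw [show typ (g u) (g u) = 0 from typ_eq_zero_iff.mpr rfl,
        show typ u u = 0 from typ_eq_zero_iff.mpr rfl]
    · have hle : typ (g u) (g v) ≤ typ u v :=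
        typ_le_iff.mpr (gagr _ u v (typ_le_iff.mp le_rfl))
      obtain ⟨k, hk, hks⟩ := typ_spec (by omega : typ u v ≠ 0)
      have hagr : agr ((k : ℕ) + 1) u v := typ_le_iff.mp (by omega)
      have hgk : g u k ≠ g v k := fun e => hk ((key k u v hagr).mp e)
      have hmem : k ∈ Finset.univ.filter fun j : Fin d => g u j ≠ g v j := by simp [hgk]
      have hge : (k : ℕ) + 1 ≤ typ (g u) (g v) :=
        Finset.le_sup (f := fun j : Fin d => (j : ℕ) + 1) hmem
      omega
  have ginj : Function.Injective g := by
    intro u v e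
    refine typ_eq_zero_iff.mp ?_
    rw [← gtyp u v, e]
    exact typ_eq_zero_iff.mpr rfl
  refine ⟨g, Finite.injective_iff_bijective.mp ginj, gtyp, ?_, ?_, ?_⟩
  · funext k; exact (spec k x₀).1 (fun _ _ => rfl)
  · funext k; exact (spec k y).2.1 (fun _ _ => rfl)
  · funext k; exact (spec k z).2.2 (fun _ _ => rfl)

/-! ### Cellwise matrices -/

variable (hn : ∀ k, 2 ≤ n k)

/-- A matrix is *cellwise* if its entries depend only on the triple of types. -/
def Cellwise (M : Matrix (∀ k : Fin d, Fin (n k)) (∀ k : Fin d, Fin (n k)) ℂ) : Prop :=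
  ∀ y z y' z' : ∀ k : Fin d, Fin (n k),
    typ (wBase d n hn) y = typ (wBase d n hn) y' → typ y z = typ y' z' →
      typ (wBase d n hn) z = typ (wBase d n hn) z' → M y z = M y' z'

lemma cellwise_mul {M N : Matrix (∀ k : Fin d, Fin (n k)) (∀ k : Fin d, Fin (n k)) ℂ}
    (hM : Cellwise hn M) (hN : Cellwise hn N) : Cellwise hn (M * N) := by
  intro y z y' z' ha hb hc
  obtain ⟨g, hgbij, hgtyp, hgx, hgy, hgz⟩ := exists_g (wBase d n hn) y z y' z' ha hb hc
  rw [Matrix.mul_apply, Matrix.mul_apply]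
  rw [← Function.Bijective.sum_comp hgbij (fun w => M y' w * N w z')]
  apply Finset.sum_congr rfl
  intro w _
  have e1 : typ (wBase d n hn) (g w) = typ (wBase d n hn) w := by
    conv_lhs => rw [← hgx]
    exact hgtyp _ w
  have e2 : typ y' (g w) = typ y w := by
    conv_lhs => rw [← hgy]
    exact hgtyp y w
  have e3 : typ (g w) z' = typ w z := by
    conv_lhs => rw [← hgz]
    exact hgtyp w z
  have hMe : M y w = M y' (g w) := hM y w y' (g w) ha e2.symm e1.symm
  have hNe : N w z = N (g w) z' := hN w z (g w) z' e1.symm e3.symm hc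
  rw [hMe, hNe]

lemma cellwise_one : Cellwise hn (1 : Matrix (∀ k : Fin d, Fin (n k)) _ ℂ) := by
  intro y z y' z' _ hb _
  rw [Matrix.one_apply, Matrix.one_apply]
  exact if_congr (by rw [← typ_eq_zero_iff, ← typ_eq_zero_iff, hb]) rfl rfl

lemma cellwise_wA {j : ℕ} (hj : j ≤ d) : Cellwise hn (wA d n j) := by
  intro y z y' z' _ hb _
  show (if wRel d n j y z then (1 : ℂ) else 0) = (if wRel d n j y' z' then (1 : ℂ) else 0)
  exact if_congr (by rw [wRel_iff_typ hj, wRel_iff_typ hj, hb]) rfl rfl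

lemma cellwise_wE {i : ℕ} (hi : i ≤ d) : Cellwise hn (wE d n hn i) := by
  intro y z y' z' ha hb _
  show (if y = z ∧ wRel d n i (wBase d n hn) y then (1 : ℂ) else 0) =
    (if y' = z' ∧ wRel d n i (wBase d n hn) y' then (1 : ℂ) else 0)
  refine if_congr ?_ rfl rfl
  rw [wRel_iff_typ hi, wRel_iff_typ hi, ← typ_eq_zero_iff, ← typ_eq_zero_iff, hb, ha]

lemma wE_diag (i : ℕ) :
    wE d n hn i = Matrix.diagonal fun y =>
      if wRel d n i (wBase d n hn) y then (1 : ℂ) else 0 := by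
  ext y z
  by_cases h : y = z
  · subst h
    simp [wE, Matrix.diagonal_apply_eq]
  · simp [wE, Matrix.diagonal_apply_ne _ h, h]

lemma triple_apply (a b c : ℕ) (y z : ∀ k : Fin d, Fin (n k)) :
    (wE d n hn a * wA d n b * wE d n hn c) y z =
      (if wRel d n a (wBase d n hn) y then (1 : ℂ) else 0) *
        (if wRel d n b y z then (1 : ℂ) else 0) *
        (if wRel d n c (wBase d n hn) z then (1 : ℂ) else 0) := by
  rw [wE_diag hn a, wE_diag hn c, Matrix.mul_diagonal, Matrix.diagonal_mul]
  rfl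

lemma cellwise_triple {a b c : ℕ} (ha : a ≤ d) (hb : b ≤ d) (hc : c ≤ d) :
    Cellwise hn (wE d n hn a * wA d n b * wE d n hn c) := by
  intro y z y' z' h1 h2 h3
  rw [triple_apply, triple_apply]
  have e1 : wRel d n a (wBase d n hn) y ↔ wRel d n a (wBase d n hn) y' := by
    rw [wRel_iff_typ ha, wRel_iff_typ ha, h1]
  have e2 : wRel d n b y z ↔ wRel d n b y' z' := by
    rw [wRel_iff_typ hb, wRel_iff_typ hb, h2]
  have e3 : wRel d n c (wBase d n hn) z ↔ wRel d n c (wBase d n hn) z' := by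
    rw [wRel_iff_typ hc, wRel_iff_typ hc, h3]
  rw [if_congr e1 rfl rfl, if_congr e2 rfl rfl, if_congr e3 rfl rfl]

lemma mem_T0_of_cellwise {M : Matrix (∀ k : Fin d, Fin (n k)) (∀ k : Fin d, Fin (n k)) ℂ}
    (hM : Cellwise hn M) : M ∈ wT0 d n hn := by
  classical
  set x₀ := wBase d n hn with hx₀
  set T : Finset (ℕ × ℕ × ℕ) :=
    (Finset.range (d + 1)) ×ˢ (Finset.range (d + 1)) ×ˢ (Finset.range (d + 1)) with hT
  set F : ℕ × ℕ × ℕ → ℂ := fun p =>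
    if hE : ∃ w : (∀ k : Fin d, Fin (n k)) × (∀ k : Fin d, Fin (n k)),
        typ x₀ w.1 = p.1 ∧ typ w.1 w.2 = p.2.1 ∧ typ x₀ w.2 = p.2.2 then
      M hE.choose.1 hE.choose.2
    else 0 with hF
  have hrep : M = ∑ p ∈ T, F p • (wE d n hn p.1 * wA d n p.2.1 * wE d n hn p.2.2) := by
    ext y z
    rw [Matrix.sum_apply]
    simp only [Matrix.smul_apply, smul_eq_mul]
    rw [Finset.sum_eq_single_of_mem (typ x₀ y, typ y z, typ x₀ z) ?_ ?_]
    · rw [triple_apply]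
      rw [if_pos ((wRel_iff_typ typ_le_d).mpr rfl),
        if_pos ((wRel_iff_typ typ_le_d).mpr rfl),
        if_pos ((wRel_iff_typ typ_le_d).mpr rfl)]
      have hEx : ∃ w : (∀ k : Fin d, Fin (n k)) × (∀ k : Fin d, Fin (n k)),
          typ x₀ w.1 = typ x₀ y ∧ typ w.1 w.2 = typ y z ∧ typ x₀ w.2 = typ x₀ z :=
        ⟨(y, z), rfl, rfl, rfl⟩
      rw [hF]
      simp only []
      rw [dif_pos hEx]
      obtain ⟨e1, e2, e3⟩ := hEx.choose_spec
      rw [hM hEx.choose.1 hEx.choose.2 y z e1 e2 e3]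
      ring
    · simp only [hT, Finset.mem_product, Finset.mem_range, Nat.lt_succ_iff]
      exact ⟨typ_le_d, typ_le_d, typ_le_d⟩
    · rintro ⟨q1, q2, q3⟩ hq hne
      simp only [hT, Finset.mem_product, Finset.mem_range, Nat.lt_succ_iff] at hq
      obtain ⟨hq1, hq2, hq3⟩ := hq
      rw [triple_apply]
      by_cases c1 : wRel d n q1 x₀ y
      case neg => rw [if_neg c1]; ring
      by_cases c2 : wRel d n q2 y z
      case neg => rw [if_neg c2]; ring
      by_cases c3 : wRel d n q3 x₀ z
      case neg => rw [if_neg c3]; ring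
      exfalso
      apply hne
      have e1 := (wRel_iff_typ hq1).mp c1
      have e2 := (wRel_iff_typ hq2).mp c2
      have e3 := (wRel_iff_typ hq3).mp c3
      simp [e1.symm, e2.symm, e3.symm]
  rw [hrep]
  refine Submodule.sum_mem _ ?_
  rintro ⟨p1, p2, p3⟩ hp
  simp only [hT, Finset.mem_product, Finset.mem_range, Nat.lt_succ_iff] at hp
  refine Submodule.smul_mem _ _ (Submodule.subset_span ?_)
  exact ⟨p1, p2, p3, hp.1, hp.2.1, hp.2.2, rfl⟩

lemma cellwise_of_mem_T0 {M : Matrix (∀ k : Fin d, Fin (n k)) (∀ k : Fin d, Fin (n k)) ℂ}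
    (h : M ∈ wT0 d n hn) : Cellwise hn M := by
  refine Submodule.span_induction ?_ ?_ ?_ ?_ h
  · rintro _ ⟨a, b, c, haa, hbb, hcc, rfl⟩
    exact cellwise_triple hn haa hbb hcc
  · intro y z y' z' _ _ _
    rfl
  · intro M N _ _ hMc hNc y z y' z' h1 h2 h3
    rw [Matrix.add_apply, Matrix.add_apply, hMc y z y' z' h1 h2 h3, hNc y z y' z' h1 h2 h3]
  · intro a M _ hMc y z y' z' h1 h2 h3
    rw [Matrix.smul_apply, Matrix.smul_apply, hMc y z y' z' h1 h2 h3]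

end TriplyRegAux

open TriplyRegAux in
/-- For the scheme `K_{n_1} ≀ ⋯ ≀ K_{n_d}`, the Terwilliger
algebra coincides with the linear span of the triple products:
`T = T₀` as sets; equivalently, `A_i E_h^* A_j ∈ T₀` for all
`0 ≤ i, j, h ≤ d` (the scheme is triply regular). -/
theorem triply_regular_wreath (d : ℕ) (hd : 1 ≤ d)
    (n : Fin d → ℕ) (hn : ∀ k, 2 ≤ n k) :
    Subalgebra.toSubmodule (wT d n hn) = wT0 d n hn ∧
      ∀ i j h : ℕ, i ≤ d → j ≤ d → h ≤ d →
        wA d n i * wE d n hn h * wA d n j ∈ wT0 d n hn := by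
  constructor
  · apply le_antisymm
    · intro M hM
      rw [Subalgebra.mem_toSubmodule] at hM
      refine Algebra.adjoin_induction ?_ ?_ ?_ ?_ hM
      · rintro x (⟨i, hi, rfl⟩ | ⟨i, hi, rfl⟩)
        · exact mem_T0_of_cellwise hn (cellwise_wA hn hi)
        · exact mem_T0_of_cellwise hn (cellwise_wE hn hi)
      · intro r
        rw [Algebra.algebraMap_eq_smul_one]
        exact Submodule.smul_mem _ _ (mem_T0_of_cellwise hn (cellwise_one hn))
      · intro x y _ _ hx hy
        exact Submodule.add_mem _ hx hy
      · intro x y _ _ hx hy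
        exact mem_T0_of_cellwise hn
          (cellwise_mul hn (cellwise_of_mem_T0 hn hx) (cellwise_of_mem_T0 hn hy))
    · rw [wT0]
      refine Submodule.span_le.mpr ?_
      rintro _ ⟨a, b, c, haa, hbb, hcc, rfl⟩
      show _ ∈ Subalgebra.toSubmodule (wT d n hn)
      rw [Subalgebra.mem_toSubmodule]
      exact mul_mem
        (mul_mem (Algebra.subset_adjoin (Or.inr ⟨a, haa, rfl⟩))
          (Algebra.subset_adjoin (Or.inl ⟨b, hbb, rfl⟩)))
        (Algebra.subset_adjoin (Or.inr ⟨c, hcc, rfl⟩))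
  · intro i j h hi hj hh
    exact mem_T0_of_cellwise hn
      (cellwise_mul hn (cellwise_mul hn (cellwise_wA hn hi) (cellwise_wE hn hh))
        (cellwise_wA hn hj))
end
end

section
/- The Terwilliger algebra T of the scheme K_{n_1} ≀ K_{n_2} ≀ ⋯ ≀ K_{n_d} has ℂ-dimension (d+1)^2 + d(d+1)/2 − b, where b = |{k ∈ {1,…,d} : n_k = 2}| is the number of factors K_{n_k} with n_k = 2. -/
open scoped Classical

noncomputable section

lemma exists_perm3 {α : Type*} [DecidableEq α] (a b c a' b' c' : α)
    (hab : a = b ↔ a' = b') (hac : a = c ↔ a' = c') (hbc : b = c ↔ b' = c') :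
    ∃ σ : Equiv.Perm α, σ a = a' ∧ σ b = b' ∧ σ c = c' := by
  set τ : Equiv.Perm α := Equiv.swap a a' with hτ
  have hτa : τ a = a' := Equiv.swap_apply_left a a'
  set ρ : Equiv.Perm α := Equiv.swap (τ b) b' with hρ
  have hρb : ρ (τ b) = b' := Equiv.swap_apply_left _ _
  have hρa : ρ a' = a' := by
    by_cases hba : b = a
    · have hba' : b' = a' := (hab.1 hba.symm).symm
      rw [hρ, hba, hτa, hba']
      simp
    · have h1 : τ b ≠ a' := by
        rw [← hτa]
        exact fun hcon => hba (τ.injective hcon)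
      have h2 : b' ≠ a' := fun hcon => hba (hab.2 hcon.symm).symm
      rw [hρ]
      exact Equiv.swap_apply_of_ne_of_ne (Ne.symm h1) (Ne.symm h2)
  set σ₂ : Equiv.Perm α := τ.trans ρ with hσ₂
  have hσ₂a : σ₂ a = a' := by rw [hσ₂]; simp only [Equiv.trans_apply]; rw [hτa, hρa]
  have hσ₂b : σ₂ b = b' := by rw [hσ₂]; simp only [Equiv.trans_apply]; rw [hρb]
  set π : Equiv.Perm α := Equiv.swap (σ₂ c) c' with hπ
  have hπc : π (σ₂ c) = c' := Equiv.swap_apply_left _ _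
  have hπa : π a' = a' := by
    by_cases hca : c = a
    · have h1 : c' = a' := (hac.1 hca.symm).symm
      have h2 : σ₂ c = a' := by rw [hca, hσ₂a]
      rw [hπ, h2, h1]
      simp
    · have h1 : σ₂ c ≠ a' := by
        rw [← hσ₂a]
        exact fun hcon => hca (σ₂.injective hcon)
      have h2 : c' ≠ a' := fun hcon => hca (hac.2 hcon.symm).symm
      rw [hπ]
      exact Equiv.swap_apply_of_ne_of_ne (Ne.symm h1) (Ne.symm h2)
  have hπb : π b' = b' := by
    by_cases hcb : c = b
    · have h1 : c' = b' := (hbc.1 hcb.symm).symm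
      have h2 : σ₂ c = b' := by rw [hcb, hσ₂b]
      rw [hπ, h2, h1]
      simp
    · have h1 : σ₂ c ≠ b' := by
        rw [← hσ₂b]
        exact fun hcon => hcb (σ₂.injective hcon)
      have h2 : c' ≠ b' := fun hcon => hcb (hbc.2 hcon.symm).symm
      rw [hπ]
      exact Equiv.swap_apply_of_ne_of_ne (Ne.symm h1) (Ne.symm h2)
  refine ⟨σ₂.trans π, ?_, ?_, ?_⟩
  · simp only [Equiv.trans_apply]; rw [hσ₂a, hπa]
  · simp only [Equiv.trans_apply]; rw [hσ₂b, hπb]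
  · simp only [Equiv.trans_apply]; rw [hπc]

namespace TerAux

variable {d : ℕ} {n : Fin d → ℕ}

/-- largest index (plus one) where `x` and `y` differ; `0` if equal. -/
def rIdx (x y : ∀ k : Fin d, Fin (n k)) : ℕ :=
  Finset.univ.sup fun k : Fin d => if x k ≠ y k then (k : ℕ) + 1 else 0

lemma rIdx_le_d (x y : ∀ k : Fin d, Fin (n k)) : rIdx x y ≤ d := by
  refine Finset.sup_le fun k _ => ?_
  split
  · exact k.isLt
  · exact Nat.zero_le _

lemma rIdx_eq_zero {x y : ∀ k : Fin d, Fin (n k)} : rIdx x y = 0 ↔ x = y := by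
  constructor
  · intro h
    funext k
    by_contra hk
    have h2 : (if x k ≠ y k then (k : ℕ) + 1 else 0) ≤ rIdx x y :=
      Finset.le_sup (f := fun k : Fin d => if x k ≠ y k then (k : ℕ) + 1 else 0)
        (Finset.mem_univ k)
    rw [if_pos hk] at h2
    omega
  · rintro rfl
    simp [rIdx]

lemma rIdx_comm (x y : ∀ k : Fin d, Fin (n k)) : rIdx x y = rIdx y x := by
  unfold rIdx
  congr 1
  funext k
  by_cases h : x k = y k <;> simp [h, Ne, eq_comm]

lemma eq_of_le_rIdx {x y : ∀ k : Fin d, Fin (n k)} {c : ℕ} (h : rIdx x y ≤ c)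
    (k : Fin d) (hk : c ≤ (k : ℕ)) : x k = y k := by
  by_contra hk'
  have h2 : (if x k ≠ y k then (k : ℕ) + 1 else 0) ≤ rIdx x y :=
    Finset.le_sup (f := fun k : Fin d => if x k ≠ y k then (k : ℕ) + 1 else 0)
      (Finset.mem_univ k)
  rw [if_pos hk'] at h2
  omega

lemma rIdx_le_of {x y : ∀ k : Fin d, Fin (n k)} {c : ℕ}
    (h : ∀ k : Fin d, c ≤ (k : ℕ) → x k = y k) : rIdx x y ≤ c := by
  refine Finset.sup_le fun k _ => ?_
  split
  · rename_i hk
    by_contra hc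
    exact hk (h k (by omega))
  · exact Nat.zero_le _

lemma exists_rIdx {x y : ∀ k : Fin d, Fin (n k)} (h : 1 ≤ rIdx x y) :
    ∃ k : Fin d, (k : ℕ) + 1 = rIdx x y ∧ x k ≠ y k := by
  have hne : (Finset.univ : Finset (Fin d)).Nonempty := by
    by_contra hh
    rw [Finset.not_nonempty_iff_eq_empty] at hh
    unfold rIdx at h
    rw [hh] at h
    simp at h
  obtain ⟨k, -, hk⟩ := Finset.exists_mem_eq_sup Finset.univ hne
    (fun k : Fin d => if x k ≠ y k then (k : ℕ) + 1 else 0)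
  rw [show (Finset.univ.sup fun k : Fin d => if x k ≠ y k then (k : ℕ) + 1 else 0) = rIdx x y
    from rfl] at hk
  by_cases hxy : x k = y k
  · rw [hk] at h; simp [hxy] at h
  · exact ⟨k, by simp [hxy] at hk; omega, hxy⟩

lemma rIdx_eq_of {x y : ∀ k : Fin d, Fin (n k)} (k₀ : Fin d) (hne : x k₀ ≠ y k₀)
    (h : ∀ k : Fin d, (k₀ : ℕ) < (k : ℕ) → x k = y k) : rIdx x y = (k₀ : ℕ) + 1 := by
  refine le_antisymm (rIdx_le_of fun k hk => h k (by omega)) ?_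
  have h2 : (if x k₀ ≠ y k₀ then (k₀ : ℕ) + 1 else 0) ≤ rIdx x y :=
    Finset.le_sup (f := fun k : Fin d => if x k ≠ y k then (k : ℕ) + 1 else 0)
      (Finset.mem_univ k₀)
  rw [if_pos hne] at h2
  exact h2

lemma rIdx_pattern {x y : ∀ k : Fin d, Fin (n k)} {c : ℕ} (hr : rIdx x y = c)
    (k : Fin d) (hk : c - 1 ≤ (k : ℕ)) : x k = y k ↔ (k : ℕ) + 1 ≠ c := by
  rcases Nat.eq_zero_or_pos c with rfl | hc
  · have : x = y := rIdx_eq_zero.1 hr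
    subst this
    simp
  · constructor
    · intro hxy hkc
      obtain ⟨k', hk', hne⟩ := exists_rIdx (x := x) (y := y) (by omega)
      have : k' = k := by
        apply Fin.ext
        omega
      subst this
      exact hne hxy
    · intro hkc
      exact eq_of_le_rIdx (le_of_eq hr) k (by omega)

variable (hn : ∀ k, 2 ≤ n k)

/-- type of a vertex: largest index (plus one) of a non-base coordinate. -/
def tIdx (x : ∀ k : Fin d, Fin (n k)) : ℕ := rIdx (wBase d n hn) x

lemma tIdx_le_d (x : ∀ k : Fin d, Fin (n k)) : tIdx hn x ≤ d := rIdx_le_d _ _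

lemma wRel_iff {i : ℕ} (hi : i ≤ d) (x y : ∀ k : Fin d, Fin (n k)) :
    wRel d n i x y ↔ rIdx x y = i := by
  unfold wRel
  split
  · rename_i hcase
    constructor
    · rintro ⟨h1, h2⟩
      have := rIdx_eq_of (x := x) (y := y) ⟨i - 1, by omega⟩ h1 (fun k hk => h2 k hk)
      rw [this]
      simp only []
      omega
    · intro hr
      constructor
      · intro hc
        have := (rIdx_pattern hr ⟨i - 1, by omega⟩ (by simp)).1 hc
        simp only [] at this
        omega
      · intro k hk
        exact eq_of_le_rIdx (le_of_eq hr) k (by omega)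
  · rename_i hcase
    have hi0 : i = 0 := by omega
    subst hi0
    exact rIdx_eq_zero.symm

def profP (p : (∀ k : Fin d, Fin (n k)) × (∀ k : Fin d, Fin (n k))) : ℕ × ℕ × ℕ :=
  (tIdx hn p.1, rIdx p.1 p.2, tIdx hn p.2)

def Pmat (c : ℕ × ℕ × ℕ) :
    Matrix (∀ k : Fin d, Fin (n k)) (∀ k : Fin d, Fin (n k)) ℂ :=
  Matrix.of fun y z => if profP hn (y, z) = c then 1 else 0

def Rset : Finset (ℕ × ℕ × ℕ) := Finset.image (profP hn) Finset.univ

lemma profP_mem_Rset (p) : profP hn p ∈ Rset hn :=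
  Finset.mem_image_of_mem _ (Finset.mem_univ p)

lemma rIdx_map {x x' w : ∀ k : Fin d, Fin (n k)} {c : ℕ} (hc : rIdx x w = c)
    (σf : ∀ k : Fin d, Equiv.Perm (Fin (n k)))
    (hσ : ∀ k : Fin d, c - 1 ≤ (k : ℕ) → σf k (x k) = x' k) :
    rIdx x' (fun k => σf k (w k)) = c := by
  rcases Nat.eq_zero_or_pos c with rfl | hc1
  · have hxw : x = w := rIdx_eq_zero.1 hc
    subst hxw
    refine rIdx_eq_zero.2 ?_
    funext k
    exact (hσ k (by omega)).symm
  · have hcd : c ≤ d := hc ▸ rIdx_le_d x w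
    have hk₀lt : c - 1 < d := by omega
    have hne : x' ⟨c - 1, hk₀lt⟩ ≠ σf ⟨c - 1, hk₀lt⟩ (w ⟨c - 1, hk₀lt⟩) := by
      rw [← hσ ⟨c - 1, hk₀lt⟩ (by simp)]
      intro hcon
      have hxw : x ⟨c - 1, hk₀lt⟩ ≠ w ⟨c - 1, hk₀lt⟩ := by
        intro he
        have := (rIdx_pattern hc ⟨c - 1, hk₀lt⟩ (by simp)).1 he
        simp only [] at this
        omega
      exact hxw ((σf _).injective hcon)
    have hup : ∀ k : Fin d, ((⟨c - 1, hk₀lt⟩ : Fin d) : ℕ) < (k : ℕ) →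
        x' k = σf k (w k) := by
      intro k hk
      simp only [] at hk
      have h1 : σf k (x k) = x' k := hσ k (by omega)
      have h2 : x k = w k := eq_of_le_rIdx (le_of_eq hc) k (by omega)
      rw [← h1, h2]
    have := rIdx_eq_of (x := x') (y := fun k => σf k (w k)) ⟨c - 1, hk₀lt⟩ hne hup
    rw [this]
    simp only []
    omega

lemma key_le (j j' h : ℕ) (y z y' z' : ∀ k : Fin d, Fin (n k))
    (h1 : tIdx hn y = tIdx hn y') (h2 : rIdx y z = rIdx y' z')
    (h3 : tIdx hn z = tIdx hn z') :
    (Finset.univ.filter fun w => rIdx y w = j ∧ tIdx hn w = h ∧ rIdx w z = j').card ≤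
      (Finset.univ.filter fun w => rIdx y' w = j ∧ tIdx hn w = h ∧ rIdx w z' = j').card := by
  by_cases hne :
      (Finset.univ.filter fun w => rIdx y w = j ∧ tIdx hn w = h ∧ rIdx w z = j').Nonempty
  swap
  · rw [Finset.not_nonempty_iff_eq_empty] at hne
    simp [hne]
  obtain ⟨w₀, hw₀⟩ := hne
  rw [Finset.mem_filter] at hw₀
  obtain ⟨-, hj, hh, hj'⟩ := hw₀
  have hh' : rIdx (wBase d n hn) w₀ = h := hh
  have hy0 : ∀ k : Fin d, max j h ≤ (k : ℕ) → wBase d n hn k = y k := by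
    intro k hk
    have e1 : y k = w₀ k := eq_of_le_rIdx (c := max j h) (by rw [hj]; omega) k hk
    have e2 : wBase d n hn k = w₀ k :=
      eq_of_le_rIdx (c := max j h) (by rw [hh']; omega) k hk
    exact e2.trans e1.symm
  have hyt : tIdx hn y ≤ max j h := rIdx_le_of hy0
  have hyt' : tIdx hn y' ≤ max j h := h1 ▸ hyt
  have hA : ∀ k : Fin d, max j h - 1 ≤ (k : ℕ) →
      (wBase d n hn k = y k ↔ wBase d n hn k = y' k) := by
    intro k hk
    rw [rIdx_pattern (x := wBase d n hn) (y := y) (c := tIdx hn y) rfl k (by omega),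
      rIdx_pattern (x := wBase d n hn) (y := y') (c := tIdx hn y') rfl k (by omega), h1]
  have hz0 : ∀ k : Fin d, max j' h ≤ (k : ℕ) → wBase d n hn k = z k := by
    intro k hk
    have hj'' : rIdx z w₀ = j' := by rw [rIdx_comm]; exact hj'
    have e1 : z k = w₀ k := eq_of_le_rIdx (c := max j' h) (by rw [hj'']; omega) k hk
    have e2 : wBase d n hn k = w₀ k :=
      eq_of_le_rIdx (c := max j' h) (by rw [hh']; omega) k hk
    exact e2.trans e1.symm
  have hzt : tIdx hn z ≤ max j' h := rIdx_le_of hz0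
  have hzt' : tIdx hn z' ≤ max j' h := h3 ▸ hzt
  have hB : ∀ k : Fin d, max j' h - 1 ≤ (k : ℕ) →
      (wBase d n hn k = z k ↔ wBase d n hn k = z' k) := by
    intro k hk
    rw [rIdx_pattern (x := wBase d n hn) (y := z) (c := tIdx hn z) rfl k (by omega),
      rIdx_pattern (x := wBase d n hn) (y := z') (c := tIdx hn z') rfl k (by omega), h3]
  have hyz : rIdx y z ≤ max j j' := by
    refine rIdx_le_of fun k hk => ?_
    have e1 : y k = w₀ k := eq_of_le_rIdx (c := max j j') (by rw [hj]; omega) k hk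
    have e2 : w₀ k = z k := eq_of_le_rIdx (c := max j j') (by rw [hj']; omega) k hk
    exact e1.trans e2
  have hyz' : rIdx y' z' ≤ max j j' := h2 ▸ hyz
  have hC : ∀ k : Fin d, max j j' - 1 ≤ (k : ℕ) → (y k = z k ↔ y' k = z' k) := by
    intro k hk
    rw [rIdx_pattern (x := y) (y := z) rfl k (by omega),
      rIdx_pattern (x := y') (y := z') rfl k (by omega), h2]
  have hσ : ∀ k : Fin d, ∃ σ : Equiv.Perm (Fin (n k)),
      (h - 1 ≤ (k : ℕ) → σ (wBase d n hn k) = wBase d n hn k) ∧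
      (j - 1 ≤ (k : ℕ) → σ (y k) = y' k) ∧
      (j' - 1 ≤ (k : ℕ) → σ (z k) = z' k) := by
    intro k
    by_cases c1 : h - 1 ≤ (k : ℕ) <;> by_cases c2 : j - 1 ≤ (k : ℕ) <;>
      by_cases c3 : j' - 1 ≤ (k : ℕ)
    · obtain ⟨σ, ha, hb, hc⟩ := exists_perm3 (wBase d n hn k) (y k) (z k)
        (wBase d n hn k) (y' k) (z' k) (hA k (by omega)) (hB k (by omega)) (hC k (by omega))
      exact ⟨σ, fun _ => ha, fun _ => hb, fun _ => hc⟩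
    · obtain ⟨σ, ha, hb, -⟩ := exists_perm3 (wBase d n hn k) (y k) (y k)
        (wBase d n hn k) (y' k) (y' k) (hA k (by omega)) (hA k (by omega)) (by simp)
      exact ⟨σ, fun _ => ha, fun _ => hb, fun hk => absurd hk c3⟩
    · obtain ⟨σ, ha, -, hc⟩ := exists_perm3 (wBase d n hn k) (wBase d n hn k) (z k)
        (wBase d n hn k) (wBase d n hn k) (z' k) Iff.rfl (hB k (by omega)) (hB k (by omega))
      exact ⟨σ, fun _ => ha, fun hk => absurd hk c2, fun _ => hc⟩
    · exact ⟨Equiv.refl _, fun _ => rfl, fun hk => absurd hk c2, fun hk => absurd hk c3⟩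
    · obtain ⟨σ, -, hb, hc⟩ := exists_perm3 (y k) (y k) (z k) (y' k) (y' k) (z' k)
        (by simp) (hC k (by omega)) (hC k (by omega))
      exact ⟨σ, fun hk => absurd hk c1, fun _ => hb, fun _ => hc⟩
    · obtain ⟨σ, -, hb, -⟩ := exists_perm3 (y k) (y k) (y k) (y' k) (y' k) (y' k)
        (by simp) (by simp) (by simp)
      exact ⟨σ, fun hk => absurd hk c1, fun _ => hb, fun hk => absurd hk c3⟩
    · obtain ⟨σ, -, -, hc⟩ := exists_perm3 (z k) (z k) (z k) (z' k) (z' k) (z' k)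
        (by simp) (by simp) (by simp)
      exact ⟨σ, fun hk => absurd hk c1, fun hk => absurd hk c2, fun _ => hc⟩
    · exact ⟨Equiv.refl _, fun hk => absurd hk c1, fun hk => absurd hk c2,
        fun hk => absurd hk c3⟩
  choose σf hσ1 hσ2 hσ3 using hσ
  refine Finset.card_le_card_of_injOn (fun w k => σf k (w k)) ?_ ?_
  · intro w hw
    rw [Finset.mem_coe, Finset.mem_filter] at hw ⊢
    obtain ⟨-, e1, e2, e3⟩ := hw
    refine ⟨Finset.mem_univ _, ?_, ?_, ?_⟩
    · exact rIdx_map e1 σf hσ2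
    · exact rIdx_map (x := wBase d n hn) (x' := wBase d n hn) e2 σf hσ1
    · have e3' : rIdx z w = j' := by rw [rIdx_comm]; exact e3
      have := rIdx_map (x := z) (x' := z') e3' σf hσ3
      rw [rIdx_comm]
      exact this
  · intro w1 _ w2 _ he
    funext k
    exact (σf k).injective (congrFun he k)

lemma key (j j' h : ℕ) (y z y' z' : ∀ k : Fin d, Fin (n k))
    (h1 : tIdx hn y = tIdx hn y') (h2 : rIdx y z = rIdx y' z')
    (h3 : tIdx hn z = tIdx hn z') :
    (Finset.univ.filter fun w => rIdx y w = j ∧ tIdx hn w = h ∧ rIdx w z = j').card =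
      (Finset.univ.filter fun w => rIdx y' w = j ∧ tIdx hn w = h ∧ rIdx w z' = j').card :=
  le_antisymm (key_le hn j j' h y z y' z' h1 h2 h3)
    (key_le hn j j' h y' z' y z h1.symm h2.symm h3.symm)

def repP (c : ℕ × ℕ × ℕ) : (∀ k : Fin d, Fin (n k)) × (∀ k : Fin d, Fin (n k)) :=
  if hc : ∃ p : (∀ k : Fin d, Fin (n k)) × (∀ k : Fin d, Fin (n k)), profP hn p = c
  then hc.choose else (wBase d n hn, wBase d n hn)

lemma profP_repP {c : ℕ × ℕ × ℕ} (hc : c ∈ Rset hn) : profP hn (repP hn c) = c := by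
  rw [Rset, Finset.mem_image] at hc
  obtain ⟨p, -, hp⟩ := hc
  have he : ∃ p, profP hn p = c := ⟨p, hp⟩
  rw [repP, dif_pos he]
  exact he.choose_spec

def liftP : (↥(Rset hn) → ℂ) →ₗ[ℂ]
    Matrix (∀ k : Fin d, Fin (n k)) (∀ k : Fin d, Fin (n k)) ℂ :=
  ∑ r : ↥(Rset hn), (LinearMap.proj r).smulRight (Pmat hn r.1)

lemma liftP_eq_sum (cf : ↥(Rset hn) → ℂ) :
    liftP hn cf = ∑ r : ↥(Rset hn), cf r • Pmat hn r.1 := by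
  rw [liftP, LinearMap.sum_apply]
  simp [LinearMap.smulRight_apply]

lemma liftP_apply (cf : ↥(Rset hn) → ℂ) (y z : ∀ k : Fin d, Fin (n k)) :
    liftP hn cf y z = cf ⟨profP hn (y, z), profP_mem_Rset hn (y, z)⟩ := by
  rw [liftP_eq_sum, Matrix.sum_apply]
  rw [Finset.sum_eq_single (⟨profP hn (y, z), profP_mem_Rset hn (y, z)⟩ : ↥(Rset hn))]
  · simp [Pmat, Matrix.smul_apply]
  · intro r _ hr
    have hne : profP hn (y, z) ≠ r.1 := by
      intro hco
      exact hr (Subtype.ext hco.symm)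
    simp [Pmat, Matrix.smul_apply, hne]
  · intro hmem
    exact absurd (Finset.mem_univ _) hmem

lemma mem_range_liftP {M : Matrix (∀ k : Fin d, Fin (n k)) (∀ k : Fin d, Fin (n k)) ℂ} :
    M ∈ LinearMap.range (liftP hn) ↔
      ∀ y z y' z' : ∀ k : Fin d, Fin (n k),
        profP hn (y, z) = profP hn (y', z') → M y z = M y' z' := by
  constructor
  · rintro ⟨cf, rfl⟩ y z y' z' hp
    rw [liftP_apply, liftP_apply]
    congr 1
    exact Subtype.ext hp
  · intro hM
    refine ⟨fun r => M (repP hn r.1).1 (repP hn r.1).2, ?_⟩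
    ext y z
    rw [liftP_apply]
    have h2 : profP hn (repP hn (profP hn (y, z))) = profP hn (y, z) :=
      profP_repP hn (profP_mem_Rset hn (y, z))
    exact hM _ _ y z h2

lemma liftP_injective : Function.Injective (liftP hn) := by
  intro cf cf' he
  funext r
  obtain ⟨r, hr⟩ := r
  have hr' := hr
  rw [Rset, Finset.mem_image] at hr'
  obtain ⟨p, -, hp⟩ := hr'
  have := congrFun (congrFun he p.1) p.2
  rw [liftP_apply, liftP_apply] at this
  subst hp
  exact this

lemma mul_mem_rangeP
    {M N : Matrix (∀ k : Fin d, Fin (n k)) (∀ k : Fin d, Fin (n k)) ℂ}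
    (hM : M ∈ LinearMap.range (liftP hn)) (hN : N ∈ LinearMap.range (liftP hn)) :
    M * N ∈ LinearMap.range (liftP hn) := by
  rw [mem_range_liftP] at hM hN ⊢
  intro y z y' z' hp
  rw [profP, profP, Prod.mk.injEq, Prod.mk.injEq] at hp
  obtain ⟨hp1, hp2, hp3⟩ := hp
  rw [Matrix.mul_apply, Matrix.mul_apply]
  have hmaps : ∀ w ∈ (Finset.univ : Finset (∀ k : Fin d, Fin (n k))),
      ((rIdx y w, tIdx hn w, rIdx w z) : ℕ × ℕ × ℕ) ∈
        (Finset.range (d + 1) ×ˢ Finset.range (d + 1) ×ˢ Finset.range (d + 1)) := by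
    intro w _
    simp only [Finset.mem_product, Finset.mem_range, Nat.lt_succ_iff]
    exact ⟨rIdx_le_d _ _, tIdx_le_d hn _, rIdx_le_d _ _⟩
  have hmaps' : ∀ w ∈ (Finset.univ : Finset (∀ k : Fin d, Fin (n k))),
      ((rIdx y' w, tIdx hn w, rIdx w z') : ℕ × ℕ × ℕ) ∈
        (Finset.range (d + 1) ×ˢ Finset.range (d + 1) ×ˢ Finset.range (d + 1)) := by
    intro w _
    simp only [Finset.mem_product, Finset.mem_range, Nat.lt_succ_iff]
    exact ⟨rIdx_le_d _ _, tIdx_le_d hn _, rIdx_le_d _ _⟩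
  rw [← Finset.sum_fiberwise_of_maps_to hmaps (fun w => M y w * N w z),
    ← Finset.sum_fiberwise_of_maps_to hmaps' (fun w => M y' w * N w z')]
  refine Finset.sum_congr rfl fun q _ => ?_
  have hfil : ∀ (u v : ∀ k : Fin d, Fin (n k)),
      (Finset.univ.filter fun w => ((rIdx u w, tIdx hn w, rIdx w v) : ℕ × ℕ × ℕ) = q) =
      (Finset.univ.filter fun w => rIdx u w = q.1 ∧ tIdx hn w = q.2.1 ∧ rIdx w v = q.2.2) := by
    intro u v
    apply Finset.filter_congr
    intro w _
    rw [Prod.ext_iff, Prod.ext_iff]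
  rw [hfil, hfil]
  have hcard := key hn q.1 q.2.2 q.2.1 y z y' z' hp1 hp2 hp3
  by_cases hne : (Finset.univ.filter fun w =>
      rIdx y w = q.1 ∧ tIdx hn w = q.2.1 ∧ rIdx w z = q.2.2).Nonempty
  swap
  · rw [Finset.not_nonempty_iff_eq_empty] at hne
    have hne2 : (Finset.univ.filter fun w =>
        rIdx y' w = q.1 ∧ tIdx hn w = q.2.1 ∧ rIdx w z' = q.2.2) = ∅ := by
      rw [← Finset.card_eq_zero, ← hcard, hne]
      simp
    rw [hne, hne2]
    simp
  obtain ⟨w₁, hw₁⟩ := hne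
  have hne2 : (Finset.univ.filter fun w =>
      rIdx y' w = q.1 ∧ tIdx hn w = q.2.1 ∧ rIdx w z' = q.2.2).Nonempty := by
    rw [← Finset.card_pos, ← hcard, Finset.card_pos]
    exact ⟨w₁, hw₁⟩
  obtain ⟨w₂, hw₂⟩ := hne2
  rw [Finset.mem_filter] at hw₁ hw₂
  obtain ⟨-, e1, e2, e3⟩ := hw₁
  obtain ⟨-, f1, f2, f3⟩ := hw₂
  have hsum1 : ∀ w ∈ (Finset.univ.filter fun w =>
      rIdx y w = q.1 ∧ tIdx hn w = q.2.1 ∧ rIdx w z = q.2.2),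
      M y w * N w z = M y w₁ * N w₁ z := by
    intro w hw
    rw [Finset.mem_filter] at hw
    obtain ⟨-, g1, g2, g3⟩ := hw
    have hMw : M y w = M y w₁ := by
      apply hM
      rw [profP, profP, Prod.mk.injEq, Prod.mk.injEq]
      exact ⟨rfl, by rw [g1, e1], by rw [g2, e2]⟩
    have hNw : N w z = N w₁ z := by
      apply hN
      rw [profP, profP, Prod.mk.injEq, Prod.mk.injEq]
      exact ⟨by rw [g2, e2], by rw [g3, e3], rfl⟩
    rw [hMw, hNw]
  have hsum2 : ∀ w ∈ (Finset.univ.filter fun w =>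
      rIdx y' w = q.1 ∧ tIdx hn w = q.2.1 ∧ rIdx w z' = q.2.2),
      M y' w * N w z' = M y' w₂ * N w₂ z' := by
    intro w hw
    rw [Finset.mem_filter] at hw
    obtain ⟨-, g1, g2, g3⟩ := hw
    have hMw : M y' w = M y' w₂ := by
      apply hM
      rw [profP, profP, Prod.mk.injEq, Prod.mk.injEq]
      exact ⟨rfl, by rw [g1, f1], by rw [g2, f2]⟩
    have hNw : N w z' = N w₂ z' := by
      apply hN
      rw [profP, profP, Prod.mk.injEq, Prod.mk.injEq]
      exact ⟨by rw [g2, f2], by rw [g3, f3], rfl⟩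
    rw [hMw, hNw]
  rw [Finset.sum_congr rfl hsum1, Finset.sum_congr rfl hsum2,
    Finset.sum_const, Finset.sum_const, hcard]
  congr 1
  have hMw : M y w₁ = M y' w₂ := by
    apply hM
    rw [profP, profP, Prod.mk.injEq, Prod.mk.injEq]
    exact ⟨hp1, by rw [e1, f1], by rw [e2, f2]⟩
  have hNw : N w₁ z = N w₂ z' := by
    apply hN
    rw [profP, profP, Prod.mk.injEq, Prod.mk.injEq]
    exact ⟨by rw [e2, f2], by rw [e3, f3], hp3⟩
  rw [hMw, hNw]

lemma one_mem_rangeP :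
    (1 : Matrix (∀ k : Fin d, Fin (n k)) (∀ k : Fin d, Fin (n k)) ℂ) ∈
      LinearMap.range (liftP hn) := by
  rw [mem_range_liftP]
  intro y z y' z' hp
  rw [profP, profP, Prod.mk.injEq, Prod.mk.injEq] at hp
  have hiff : y = z ↔ y' = z' := by
    rw [← rIdx_eq_zero, ← rIdx_eq_zero, hp.2.1]
  rw [Matrix.one_apply, Matrix.one_apply]
  by_cases hyz : y = z
  · rw [if_pos hyz, if_pos (hiff.1 hyz)]
  · rw [if_neg hyz, if_neg (fun hc => hyz (hiff.2 hc))]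

lemma wA_mem_rangeP {j : ℕ} (hj : j ≤ d) : wA d n j ∈ LinearMap.range (liftP hn) := by
  rw [mem_range_liftP]
  intro y z y' z' hp
  rw [profP, profP, Prod.mk.injEq, Prod.mk.injEq] at hp
  show (if wRel d n j y z then (1 : ℂ) else 0) = if wRel d n j y' z' then 1 else 0
  rw [wRel_iff hj, wRel_iff hj, hp.2.1]

lemma wE_mem_rangeP {i : ℕ} (hi : i ≤ d) : wE d n hn i ∈ LinearMap.range (liftP hn) := by
  rw [mem_range_liftP]
  intro y z y' z' hp
  rw [profP, profP, Prod.mk.injEq, Prod.mk.injEq] at hp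
  show (if (y = z ∧ wRel d n i (wBase d n hn) y) then (1 : ℂ) else 0) =
    (if (y' = z' ∧ wRel d n i (wBase d n hn) y') then (1 : ℂ) else 0)
  rw [wRel_iff hi, wRel_iff hi]
  have hiff : y = z ↔ y' = z' := by
    rw [← rIdx_eq_zero, ← rIdx_eq_zero, hp.2.1]
  have hiff2 : rIdx (wBase d n hn) y = i ↔ rIdx (wBase d n hn) y' = i := by
    rw [show rIdx (wBase d n hn) y = tIdx hn y from rfl,
      show rIdx (wBase d n hn) y' = tIdx hn y' from rfl, hp.1]
  by_cases hc : y = z ∧ rIdx (wBase d n hn) y = i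
  · rw [if_pos hc, if_pos ⟨hiff.1 hc.1, hiff2.1 hc.2⟩]
  · rw [if_neg hc, if_neg (fun hc2 => hc ⟨hiff.2 hc2.1, hiff2.2 hc2.2⟩)]

lemma triple_eq {i j h : ℕ} (hi : i ≤ d) (hj : j ≤ d) (hh : h ≤ d) :
    wE d n hn i * wA d n j * wE d n hn h = Pmat hn (i, j, h) := by
  ext y z
  rw [Matrix.mul_apply]
  rw [Finset.sum_eq_single z]
  · rw [Matrix.mul_apply, Finset.sum_eq_single y]
    · show ((if (y = y ∧ wRel d n i (wBase d n hn) y) then (1:ℂ) else 0) *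
        (if wRel d n j y z then 1 else 0)) *
        (if (z = z ∧ wRel d n h (wBase d n hn) z) then 1 else 0) = _
      rw [wRel_iff hi, wRel_iff hj, wRel_iff hh]
      show _ = if profP hn (y, z) = (i, j, h) then (1:ℂ) else 0
      rw [profP]
      simp only [Prod.mk.injEq]
      by_cases h1 : rIdx (wBase d n hn) y = i <;>
        by_cases h2 : rIdx y z = j <;>
          by_cases h3 : rIdx (wBase d n hn) z = h <;>
            simp [h1, h2, h3, tIdx]
    · intro u _ hu
      show ((if (y = u ∧ _) then (1:ℂ) else 0) * _) = 0
      rw [if_neg (fun hc => hu hc.1.symm)]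
      ring
    · intro hy
      exact absurd (Finset.mem_univ _) hy
  · intro v _ hv
    show (_ * (if (v = z ∧ _) then (1:ℂ) else 0)) = 0
    rw [if_neg (fun hc => hv hc.1)]
    ring
  · intro hz
    exact absurd (Finset.mem_univ _) hz

def Valg : Subalgebra ℂ (Matrix (∀ k : Fin d, Fin (n k)) (∀ k : Fin d, Fin (n k)) ℂ) where
  carrier := {M | M ∈ LinearMap.range (liftP hn)}
  mul_mem' := fun ha hb => mul_mem_rangeP hn ha hb
  one_mem' := one_mem_rangeP hn
  add_mem' := fun {a b} ha hb =>
    show a + b ∈ LinearMap.range (liftP hn) from Submodule.add_mem _ ha hb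
  zero_mem' := show (0 : Matrix _ _ ℂ) ∈ LinearMap.range (liftP hn) from
    Submodule.zero_mem _
  algebraMap_mem' := fun r => by
    show algebraMap ℂ _ r ∈ LinearMap.range (liftP hn)
    rw [Algebra.algebraMap_eq_smul_one]
    exact Submodule.smul_mem _ r (one_mem_rangeP hn)

lemma wT_le_Valg : wT d n hn ≤ Valg hn := by
  rw [wT]
  apply Algebra.adjoin_le
  rintro M (⟨i, hi, rfl⟩ | ⟨i, hi, rfl⟩)
  · exact wA_mem_rangeP hn hi
  · exact wE_mem_rangeP hn hi

lemma toSubmodule_wT :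
    Subalgebra.toSubmodule (wT d n hn) = LinearMap.range (liftP hn) := by
  apply le_antisymm
  · intro M hM
    exact wT_le_Valg hn hM
  · rintro M ⟨cf, rfl⟩
    show liftP hn cf ∈ wT d n hn
    rw [liftP_eq_sum]
    apply Subalgebra.sum_mem
    intro r _
    apply Subalgebra.smul_mem
    obtain ⟨⟨i, j, h⟩, hr⟩ := r
    have hmem := hr
    rw [Rset, Finset.mem_image] at hmem
    obtain ⟨p, -, hp⟩ := hmem
    rw [profP, Prod.mk.injEq, Prod.mk.injEq] at hp
    have hi : i ≤ d := by rw [← hp.1]; exact tIdx_le_d hn _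
    have hj : j ≤ d := by rw [← hp.2.1]; exact rIdx_le_d _ _
    have hh : h ≤ d := by rw [← hp.2.2]; exact tIdx_le_d hn _
    show Pmat hn (i, j, h) ∈ wT d n hn
    rw [← triple_eq hn hi hj hh]
    have hEi : wE d n hn i ∈ wT d n hn :=
      Algebra.subset_adjoin (Or.inr ⟨i, hi, rfl⟩)
    have hEh : wE d n hn h ∈ wT d n hn :=
      Algebra.subset_adjoin (Or.inr ⟨h, hh, rfl⟩)
    have hAj : wA d n j ∈ wT d n hn :=
      Algebra.subset_adjoin (Or.inl ⟨j, hj, rfl⟩)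
    exact mul_mem (mul_mem hEi hAj) hEh

lemma finrank_wT : Module.finrank ℂ ↥(wT d n hn) = (Rset hn).card := by
  have h1 : Module.finrank ℂ ↥(wT d n hn) =
      Module.finrank ℂ ↥(Subalgebra.toSubmodule (wT d n hn)) := rfl
  rw [h1, toSubmodule_wT, LinearMap.finrank_range_of_inj (liftP_injective hn),
    Module.finrank_fintype_fun_eq_card]
  exact Fintype.card_coe _

def nn (i : ℕ) : ℕ :=
  if hc : 1 ≤ i ∧ i ≤ d then n ⟨i - 1, by omega⟩ else 0

def jset (i h : ℕ) : Finset ℕ :=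
  if i < h then {h}
  else if h < i then {i}
  else if i = 0 then {0}
  else if 3 ≤ nn (n := n) i then insert i (Finset.range i)
  else Finset.range i

lemma mem_jset {i h j : ℕ} :
    j ∈ jset (n := n) i h ↔
      (i < h ∧ j = h) ∨ (h < i ∧ j = i) ∨ (i = h ∧ j < i) ∨
        (i = h ∧ j = i ∧ (i = 0 ∨ (1 ≤ i ∧ 3 ≤ nn (n := n) i))) := by
  unfold jset
  split_ifs with h1 h2 h3 h4
  · simp only [Finset.mem_singleton]
    constructor
    · intro hj; exact Or.inl ⟨h1, hj⟩
    · rintro (⟨-, hj⟩ | ⟨hlt, -⟩ | ⟨he, -⟩ | ⟨he, -, -⟩) <;> omega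
  · simp only [Finset.mem_singleton]
    constructor
    · intro hj; exact Or.inr (Or.inl ⟨h2, hj⟩)
    · rintro (⟨hlt, -⟩ | ⟨-, hj⟩ | ⟨he, -⟩ | ⟨he, -, -⟩) <;> omega
  · simp only [Finset.mem_singleton]
    constructor
    · intro hj
      exact Or.inr (Or.inr (Or.inr ⟨by omega, by omega, Or.inl h3⟩))
    · rintro (⟨hlt, -⟩ | ⟨hlt, -⟩ | ⟨-, hj⟩ | ⟨-, hj, -⟩) <;> omega
  · simp only [Finset.mem_insert, Finset.mem_range]
    constructor
    · rintro (rfl | hj)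
      · exact Or.inr (Or.inr (Or.inr ⟨by omega, rfl, Or.inr ⟨by omega, h4⟩⟩))
      · exact Or.inr (Or.inr (Or.inl ⟨by omega, hj⟩))
    · rintro (⟨hlt, -⟩ | ⟨hlt, -⟩ | ⟨-, hj⟩ | ⟨-, hj, -⟩)
      · omega
      · omega
      · exact Or.inr hj
      · exact Or.inl hj
  · simp only [Finset.mem_range]
    constructor
    · intro hj; exact Or.inr (Or.inr (Or.inl ⟨by omega, hj⟩))
    · rintro (⟨hlt, -⟩ | ⟨hlt, -⟩ | ⟨-, hj⟩ | ⟨-, rfl, hor⟩)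
      · omega
      · omega
      · exact hj
      · rcases hor with h0 | ⟨h5, h6⟩
        · omega
        · exact absurd h6 h4

lemma le_rIdx_of_ne {x y : ∀ k : Fin d, Fin (n k)} (k : Fin d) (h : x k ≠ y k) :
    (k : ℕ) + 1 ≤ rIdx x y := by
  have h2 : (if x k ≠ y k then (k : ℕ) + 1 else 0) ≤ rIdx x y :=
    Finset.le_sup (f := fun k : Fin d => if x k ≠ y k then (k : ℕ) + 1 else 0)
      (Finset.mem_univ k)
  rw [if_pos h] at h2
  exact h2

lemma struct (y z : ∀ k : Fin d, Fin (n k)) :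
    rIdx y z ∈ jset (n := n) (tIdx hn y) (tIdx hn z) := by
  rw [mem_jset]
  rcases Nat.eq_zero_or_pos (rIdx y z) with hj0 | hj1
  · have hyz : y = z := rIdx_eq_zero.1 hj0
    subst hyz
    rcases Nat.eq_zero_or_pos (tIdx hn y) with hi0 | hi1
    · exact Or.inr (Or.inr (Or.inr ⟨rfl, by omega, Or.inl hi0⟩))
    · exact Or.inr (Or.inr (Or.inl ⟨rfl, by omega⟩))
  · obtain ⟨k₀, hk₀, hne₀⟩ := exists_rIdx hj1
    rcases lt_trichotomy (rIdx y z) (tIdx hn y) with hij | hij | hij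
    · -- j < i : show types equal
      obtain ⟨k₁, hk₁, hne₁⟩ := exists_rIdx (x := wBase d n hn) (y := y)
        (show 1 ≤ tIdx hn y by omega)
      rw [show rIdx (wBase d n hn) y = tIdx hn y from rfl] at hk₁
      have hz₁ : y k₁ = z k₁ := eq_of_le_rIdx (le_refl (rIdx y z)) k₁ (by omega)
      have h1 : (k₁ : ℕ) + 1 ≤ tIdx hn z := le_rIdx_of_ne k₁ (by rw [← hz₁]; exact hne₁)
      have h2 : tIdx hn z ≤ tIdx hn y := by
        refine rIdx_le_of fun k hk => ?_
        have e1 : y k = z k := eq_of_le_rIdx (le_of_lt hij) k hk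
        have e2 : wBase d n hn k = y k := eq_of_le_rIdx (le_refl (tIdx hn y)) k hk
        exact e2.trans e1
      have heq : tIdx hn z = tIdx hn y := by omega
      exact Or.inr (Or.inr (Or.inl ⟨heq.symm, by omega⟩))
    · -- i = j
      have hh_le : tIdx hn z ≤ rIdx y z := by
        refine rIdx_le_of fun k hk => ?_
        have e1 : y k = z k := eq_of_le_rIdx (le_refl (rIdx y z)) k hk
        have e2 : wBase d n hn k = y k :=
          eq_of_le_rIdx (le_of_eq hij.symm) k hk
        exact e2.trans e1
      rcases eq_or_lt_of_le hh_le with hh | hh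
      · -- h = j = i : need 3 ≤ nn
        have hyb : y k₀ ≠ wBase d n hn k₀ := by
          intro he
          have := (rIdx_pattern (x := wBase d n hn) (y := y) (c := tIdx hn y) rfl k₀
            (by omega)).1 he.symm
          omega
        have hzb : z k₀ ≠ wBase d n hn k₀ := by
          intro he
          have := (rIdx_pattern (x := wBase d n hn) (y := z) (c := tIdx hn z) rfl k₀
            (by omega)).1 he.symm
          omega
        have h3 : 3 ≤ n k₀ := by
          have hcard : ({y k₀, z k₀, wBase d n hn k₀} : Finset (Fin (n k₀))).card = 3 := by
            rw [Finset.card_insert_of_notMem (by simp [hne₀, hyb]),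
              Finset.card_insert_of_notMem (by simp [hzb]), Finset.card_singleton]
          have hle := Finset.card_le_univ ({y k₀, z k₀, wBase d n hn k₀} : Finset (Fin (n k₀)))
          simpa [hcard] using hle
        have hnn : nn (n := n) (tIdx hn y) = n k₀ := by
          rw [nn, dif_pos (show 1 ≤ tIdx hn y ∧ tIdx hn y ≤ d from
            ⟨by omega, by rw [← hij]; exact rIdx_le_d y z⟩)]
          congr 1
          exact Fin.ext (by simp; omega)
        exact Or.inr (Or.inr (Or.inr ⟨by omega, by omega, Or.inr ⟨by omega,
          by rw [hnn]; exact h3⟩⟩))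
      · exact Or.inr (Or.inl ⟨by omega, by omega⟩)
    · -- i < j : h = j
      have hyk₀ : wBase d n hn k₀ = y k₀ :=
        eq_of_le_rIdx (le_refl (tIdx hn y)) k₀ (by omega)
      have h1 : (k₀ : ℕ) + 1 ≤ tIdx hn z :=
        le_rIdx_of_ne k₀ (by rw [← hyk₀] at hne₀; exact hne₀)
      have h2 : tIdx hn z ≤ rIdx y z := by
        refine rIdx_le_of fun k hk => ?_
        have e1 : y k = z k := eq_of_le_rIdx (le_refl (rIdx y z)) k hk
        have e2 : wBase d n hn k = y k :=
          eq_of_le_rIdx (le_of_lt hij) k hk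
        exact e2.trans e1
      exact Or.inl ⟨by omega, by omega⟩

def onev (k : Fin d) : Fin (n k) := ⟨1, by have := hn k; omega⟩

lemma onev_ne (k : Fin d) : onev hn k ≠ wBase d n hn k := by
  simp [onev, wBase, Fin.ext_iff]

def vec2 (a b : ℕ) : ∀ k : Fin d, Fin (n k) := fun k =>
  if (k : ℕ) + 1 = a ∨ (k : ℕ) + 1 = b then onev hn k else wBase d n hn k

def twov (i : ℕ) : ∀ k : Fin d, Fin (n k) := fun k =>
  if hk : (k : ℕ) + 1 = i ∧ 3 ≤ n k then ⟨2, by omega⟩ else wBase d n hn k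

lemma tIdx_vec2 {a b : ℕ} (ha : a ≤ d) (hb : b ≤ d) :
    tIdx hn (vec2 hn a b) = max a b := by
  rcases Nat.eq_zero_or_pos (max a b) with h0 | h1
  · have hv : vec2 hn a b = wBase d n hn := by
      funext k
      rw [vec2, if_neg (by omega)]
    rw [tIdx, hv, h0]
    exact rIdx_eq_zero.2 rfl
  · have hlt : max a b - 1 < d := by omega
    have hne : wBase d n hn ⟨max a b - 1, hlt⟩ ≠ vec2 hn a b ⟨max a b - 1, hlt⟩ := by
      rw [vec2, if_pos (by simp only []; omega)]
      exact (onev_ne hn _).symm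
    have hup : ∀ k : Fin d, ((⟨max a b - 1, hlt⟩ : Fin d) : ℕ) < (k : ℕ) →
        wBase d n hn k = vec2 hn a b k := by
      intro k hk
      simp only [] at hk
      rw [vec2, if_neg (by omega)]
    have := rIdx_eq_of (x := wBase d n hn) (y := vec2 hn a b) ⟨max a b - 1, hlt⟩ hne hup
    rw [tIdx, this]
    simp only []
    omega

lemma rIdx_vec2 {c a : ℕ} (hc : c ≤ d) (ha : a ≤ d) (hne : c ≠ a) :
    rIdx (vec2 hn a a) (vec2 hn c a) = c := by
  rcases Nat.eq_zero_or_pos c with rfl | h1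
  · have hv : vec2 hn 0 a = vec2 hn a a := by
      funext k
      rw [vec2, vec2]
      exact if_congr (by omega) rfl rfl
    rw [hv, rIdx_eq_zero]
  · have hlt : c - 1 < d := by omega
    have hneq : vec2 hn a a ⟨c - 1, hlt⟩ ≠ vec2 hn c a ⟨c - 1, hlt⟩ := by
      rw [vec2, vec2, if_neg (by simp only []; omega), if_pos (by simp only []; omega)]
      exact (onev_ne hn _).symm
    have hup : ∀ k : Fin d, ((⟨c - 1, hlt⟩ : Fin d) : ℕ) < (k : ℕ) →
        vec2 hn a a k = vec2 hn c a k := by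
      intro k hk
      simp only [] at hk
      rw [vec2, vec2]
      exact if_congr (by omega) rfl rfl
    have := rIdx_eq_of (x := vec2 hn a a) (y := vec2 hn c a) ⟨c - 1, hlt⟩ hneq hup
    rw [this]
    simp only []
    omega

lemma nn_eq {i : ℕ} (hi1 : 1 ≤ i) (hid : i ≤ d) (hlt : i - 1 < d) :
    nn (n := n) i = n ⟨i - 1, hlt⟩ := by
  rw [nn, dif_pos ⟨hi1, hid⟩]

lemma tIdx_twov {i : ℕ} (hi1 : 1 ≤ i) (hid : i ≤ d) (h3 : 3 ≤ nn (n := n) i) :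
    tIdx hn (twov hn i) = i := by
  have hlt : i - 1 < d := by omega
  have h3' : 3 ≤ n ⟨i - 1, hlt⟩ := by rwa [nn_eq hi1 hid hlt] at h3
  have hneq : wBase d n hn ⟨i - 1, hlt⟩ ≠ twov hn i ⟨i - 1, hlt⟩ := by
    rw [twov, dif_pos (by exact ⟨by simp only []; omega, h3'⟩)]
    simp [wBase, Fin.ext_iff]
  have hup : ∀ k : Fin d, ((⟨i - 1, hlt⟩ : Fin d) : ℕ) < (k : ℕ) →
      wBase d n hn k = twov hn i k := by
    intro k hk
    simp only [] at hk
    rw [twov, dif_neg (by omega)]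
  have := rIdx_eq_of (x := wBase d n hn) (y := twov hn i) ⟨i - 1, hlt⟩ hneq hup
  rw [tIdx, this]
  simp only []
  omega

lemma rIdx_vec2_twov {i : ℕ} (hi1 : 1 ≤ i) (hid : i ≤ d) (h3 : 3 ≤ nn (n := n) i) :
    rIdx (vec2 hn i i) (twov hn i) = i := by
  have hlt : i - 1 < d := by omega
  have h3' : 3 ≤ n ⟨i - 1, hlt⟩ := by rwa [nn_eq hi1 hid hlt] at h3
  have hneq : vec2 hn i i ⟨i - 1, hlt⟩ ≠ twov hn i ⟨i - 1, hlt⟩ := by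
    rw [vec2, twov, if_pos (by simp only []; omega),
      dif_pos (by exact ⟨by simp only []; omega, h3'⟩)]
    simp [onev, Fin.ext_iff]
  have hup : ∀ k : Fin d, ((⟨i - 1, hlt⟩ : Fin d) : ℕ) < (k : ℕ) →
      vec2 hn i i k = twov hn i k := by
    intro k hk
    simp only [] at hk
    rw [vec2, twov, if_neg (by omega), dif_neg (by omega)]
  have := rIdx_eq_of (x := vec2 hn i i) (y := twov hn i) ⟨i - 1, hlt⟩ hneq hup
  rw [this]
  simp only []
  omega

lemma jset_sub (i h j : ℕ) (hi : i ≤ d) (hh : h ≤ d) (hj : j ∈ jset (n := n) i h) :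
    (i, j, h) ∈ Rset hn := by
  rw [Rset, Finset.mem_image]
  rw [mem_jset] at hj
  rcases hj with ⟨hlt, hjh⟩ | ⟨hlt, hjh⟩ | ⟨heq, hlt⟩ | ⟨heq, hjh, hor⟩
  · rw [hjh]
    refine ⟨(vec2 hn i i, vec2 hn h i), Finset.mem_univ _, ?_⟩
    rw [profP]
    have t1 : tIdx hn (vec2 hn i i) = i := by rw [tIdx_vec2 hn hi hi]; omega
    have t2 : tIdx hn (vec2 hn h i) = h := by rw [tIdx_vec2 hn hh hi]; omega
    have t3 : rIdx (vec2 hn i i) (vec2 hn h i) = h := rIdx_vec2 hn hh hi (by omega)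
    rw [t1, t2, t3]
  · rw [hjh]
    refine ⟨(vec2 hn i h, vec2 hn h h), Finset.mem_univ _, ?_⟩
    rw [profP]
    have t1 : tIdx hn (vec2 hn i h) = i := by rw [tIdx_vec2 hn hi hh]; omega
    have t2 : tIdx hn (vec2 hn h h) = h := by rw [tIdx_vec2 hn hh hh]; omega
    have t3 : rIdx (vec2 hn i h) (vec2 hn h h) = i := by
      rw [rIdx_comm]
      exact rIdx_vec2 hn hi hh (by omega)
    rw [t1, t2, t3]
  · subst heq
    refine ⟨(vec2 hn i i, vec2 hn j i), Finset.mem_univ _, ?_⟩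
    rw [profP]
    have t1 : tIdx hn (vec2 hn i i) = i := by rw [tIdx_vec2 hn hi hi]; omega
    have t2 : tIdx hn (vec2 hn j i) = i := by rw [tIdx_vec2 hn (by omega) hi]; omega
    have t3 : rIdx (vec2 hn i i) (vec2 hn j i) = j := rIdx_vec2 hn (by omega) hi (by omega)
    rw [t1, t2, t3]
  · rw [hjh, ← heq]
    rcases hor with hi0 | ⟨hi1, h3⟩
    · subst hi0
      refine ⟨(wBase d n hn, wBase d n hn), Finset.mem_univ _, ?_⟩
      rw [profP]
      have t1 : tIdx hn (wBase d n hn) = 0 := rIdx_eq_zero.2 rfl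
      have t3 : rIdx (wBase d n hn) (wBase d n hn) = 0 := rIdx_eq_zero.2 rfl
      rw [t1, t3]
    · refine ⟨(vec2 hn i i, twov hn i), Finset.mem_univ _, ?_⟩
      rw [profP]
      have t1 : tIdx hn (vec2 hn i i) = i := by rw [tIdx_vec2 hn hi hi]; omega
      have t2 : tIdx hn (twov hn i) = i := tIdx_twov hn hi1 hi h3
      have t3 : rIdx (vec2 hn i i) (twov hn i) = i := rIdx_vec2_twov hn hi1 hi h3
      rw [t1, t2, t3]

def Fset : Finset (ℕ × ℕ × ℕ) :=
  ((Finset.range (d + 1)) ×ˢ (Finset.range (d + 1))).biUnion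
    (fun p => (jset (n := n) p.1 p.2).image fun j => (p.1, j, p.2))

lemma Rset_eq : Rset hn = Fset (n := n) := by
  ext c
  constructor
  · intro hc
    rw [Rset, Finset.mem_image] at hc
    obtain ⟨p, -, rfl⟩ := hc
    rw [Fset, Finset.mem_biUnion]
    refine ⟨(tIdx hn p.1, tIdx hn p.2), ?_, ?_⟩
    · simp only [Finset.mem_product, Finset.mem_range, Nat.lt_succ_iff]
      exact ⟨tIdx_le_d hn _, tIdx_le_d hn _⟩
    · exact Finset.mem_image.2 ⟨rIdx p.1 p.2, struct hn p.1 p.2, rfl⟩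
  · intro hc
    rw [Fset, Finset.mem_biUnion] at hc
    obtain ⟨⟨i, h⟩, hmem, hc⟩ := hc
    rw [Finset.mem_image] at hc
    obtain ⟨j, hj, rfl⟩ := hc
    simp only [Finset.mem_product, Finset.mem_range, Nat.lt_succ_iff] at hmem
    exact jset_sub hn i h j hmem.1 hmem.2 hj

lemma jset_card_offdiag {i h : ℕ} (hne : i ≠ h) : (jset (n := n) i h).card = 1 := by
  rw [jset]
  rcases lt_trichotomy i h with h1 | h1 | h1
  · rw [if_pos h1]; simp
  · exact absurd h1 hne
  · rw [if_neg (by omega), if_pos h1]; simp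

lemma jset_card_diag {i : ℕ} :
    (jset (n := n) i i).card =
      if i = 0 then 1 else if 3 ≤ nn (n := n) i then i + 1 else i := by
  rw [jset, if_neg (lt_irrefl i), if_neg (lt_irrefl i)]
  split_ifs with h1 h2
  · simp
  · rw [Finset.card_insert_of_notMem (by simp), Finset.card_range]
  · rw [Finset.card_range]

include hn in
lemma card_Fset :
    (Fset (n := n)).card + (Finset.univ.filter fun k : Fin d => n k = 2).card =
      (d + 1) ^ 2 + d * (d + 1) / 2 := by
  have hstep1 : (Fset (n := n)).card =
      ∑ p ∈ (Finset.range (d + 1)) ×ˢ (Finset.range (d + 1)),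
        (jset (n := n) p.1 p.2).card := by
    rw [Fset, Finset.card_biUnion]
    · refine Finset.sum_congr rfl fun p _ => ?_
      apply Finset.card_image_of_injective
      intro a b hab
      exact congrArg (Prod.fst ∘ Prod.snd) hab
    · intro p hp q hq hpq
      simp only [Function.onFun]; rw [Finset.disjoint_left]
      intro a ha hb
      rw [Finset.mem_image] at ha hb
      obtain ⟨ja, -, rfl⟩ := ha
      obtain ⟨jb, -, hb⟩ := hb
      apply hpq
      rw [Prod.mk.injEq, Prod.mk.injEq] at hb
      exact Prod.ext hb.1.symm hb.2.2.symm
  rw [hstep1, Finset.sum_product]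
  have hstep2 : ∀ i ∈ Finset.range (d + 1),
      (∑ h ∈ Finset.range (d + 1), (jset (n := n) i h).card) =
        d + (jset (n := n) i i).card := by
    intro i hi
    rw [← Finset.sum_erase_add _ _ hi]
    congr 1
    have hone : ∀ h ∈ (Finset.range (d + 1)).erase i, (jset (n := n) i h).card = 1 := by
      intro h hh
      rw [Finset.mem_erase] at hh
      exact jset_card_offdiag (Ne.symm hh.1)
    rw [Finset.sum_congr rfl hone, Finset.sum_const, smul_eq_mul, mul_one,
      Finset.card_erase_of_mem hi, Finset.card_range]
    omega
  rw [Finset.sum_congr rfl hstep2, Finset.sum_add_distrib, Finset.sum_const,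
    Finset.card_range, smul_eq_mul]
  have hstep3 : (∑ i ∈ Finset.range (d + 1), (jset (n := n) i i).card) +
      (Finset.univ.filter fun k : Fin d => n k = 2).card =
        ∑ i ∈ Finset.range (d + 1), (i + 1) := by
    have hb : (Finset.univ.filter fun k : Fin d => n k = 2).card =
        ∑ i ∈ Finset.range (d + 1),
          (if 1 ≤ i ∧ nn (n := n) i = 2 then 1 else 0) := by
      rw [Finset.sum_range_succ' (fun i => if 1 ≤ i ∧ nn (n := n) i = 2 then 1 else 0) d]
      rw [if_neg (by simp), add_zero]
      rw [Finset.card_filter]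
      rw [← Fin.sum_univ_eq_sum_range (fun i => if 1 ≤ i + 1 ∧ nn (n := n) (i + 1) = 2 then 1 else 0) d]
      refine Finset.sum_congr rfl fun k _ => ?_
      have hk : nn (n := n) ((k : ℕ) + 1) = n k := by
        rw [nn, dif_pos ⟨by omega, by omega⟩]
        congr 1
      rw [hk]
      simp
    rw [hb, ← Finset.sum_add_distrib]
    refine Finset.sum_congr rfl fun i hi => ?_
    rw [Finset.mem_range, Nat.lt_succ_iff] at hi
    rw [jset_card_diag]
    rcases Nat.eq_zero_or_pos i with rfl | hi1
    · simp
    · rw [if_neg (by omega)]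
      have hnn2 : 2 ≤ nn (n := n) i := by
        rw [nn, dif_pos ⟨hi1, hi⟩]
        exact hn _
      by_cases h3 : 3 ≤ nn (n := n) i
      · rw [if_pos h3, if_neg (by omega)]
      · rw [if_neg h3, if_pos ⟨hi1, by omega⟩]
  have hgauss : (∑ i ∈ Finset.range (d + 1), (i + 1)) * 2 = (d + 2) * (d + 1) := by
    have h1 : (∑ i ∈ Finset.range (d + 2), i) =
        (∑ i ∈ Finset.range (d + 1), (i + 1)) + 0 :=
      Finset.sum_range_succ' id (d + 1)
    have h2 := Finset.sum_range_id_mul_two (d + 2)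
    rw [h1, add_zero, show d + 2 - 1 = d + 1 from rfl] at h2
    exact h2
  have e1 : (d + 2) * (d + 1) = d * (d + 1) + 2 * (d + 1) := by ring
  have e2 : (d + 1) ^ 2 = d * (d + 1) + (d + 1) := by ring
  have e3 : (d + 1) * d = d * (d + 1) := by ring
  rw [e1] at hgauss
  rw [e2, e3]
  have hdvd : 2 ∣ d * (d + 1) := (Nat.even_mul_succ_self d).two_dvd
  generalize hP : d * (d + 1) = P at *
  omega

end TerAux

/-- The Terwilliger algebra `T` of `K_{n_1} ≀ ⋯ ≀ K_{n_d}` has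
`ℂ`-dimension `(d+1)^2 + d(d+1)/2 - b`, where `b` is the number of factors
`K_{n_k}` with `n_k = 2`. -/
theorem dim_Terwilliger_wreath (d : ℕ) (hd : 1 ≤ d)
    (n : Fin d → ℕ) (hn : ∀ k, 2 ≤ n k) :
    Module.finrank ℂ ↥(wT d n hn) =
      (d + 1) ^ 2 + d * (d + 1) / 2 -
        (Finset.univ.filter fun k : Fin d => n k = 2).card := by
  rw [TerAux.finrank_wT hn, TerAux.Rset_eq hn]
  have h1 := TerAux.card_Fset (n := n) hn
  generalize hX : (d + 1) ^ 2 + d * (d + 1) / 2 = X at h1 ⊢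
  omega
end
end
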